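/- arXiv:2003.13944 — 2 statements merged into one kernel-verified Lean document; each statement's English description precedes it below -/
import Mathlib

section
/- Let S be a set of 6 points of P²(F_q) lying on a smooth conic, or a set of 6 points lying on two F_q-rational lines with 3 points on each line and not including the intersection point of the lines. Then the space V_S of codewords of C_{2,2}^⊥ supported on S is 1-dimensional, and every nonzero element of V_S has weight exactly 6. -/
open MvPolynomial

/-- The linear functional `y ↦ Σ_i a i * y i` on `ι → F`. -/
noncomputable def coordPairing {F : Type*} [Field F] {ι : Type*} [Fintype ι] (a : ι → F) :
    (ι → F) →ₗ[F] F :=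
  ∑ i, a i • LinearMap.proj i

/-- The dual code `C_{2,d}^⊥` of the projective Reed–Muller code of degree-`d` plane curves. -/
noncomputable def dualRMCode (F : Type*) [Field F] [Fintype F]
    [Fintype (Projectivization F (Fin 3 → F))] (d : ℕ) :
    Submodule F (Projectivization F (Fin 3 → F) → F) :=
  ⨅ f ∈ {f : MvPolynomial (Fin 3) F | f.IsHomogeneous d},
    LinearMap.ker (coordPairing fun p => eval p.rep f)


open Matrix

namespace DCAux
variable {F : Type*} [Field F]

def Qf (c : Fin 6 → F) (x : Fin 3 → F) : F :=
  c 0 * (x 0 * x 0) + c 1 * (x 1 * x 1) + c 2 * (x 2 * x 2) +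
  c 3 * (x 0 * x 1) + c 4 * (x 0 * x 2) + c 5 * (x 1 * x 2)

def crv (a b : Fin 3 → F) : Fin 3 → F :=
  ![a 1 * b 2 - a 2 * b 1, a 2 * b 0 - a 0 * b 2, a 0 * b 1 - a 1 * b 0]

def Dt (a b x : Fin 3 → F) : F := crv a b ⬝ᵥ x

lemma Dt_expand (a b x : Fin 3 → F) :
    Dt a b x = (a 1 * b 2 - a 2 * b 1) * x 0 + (a 2 * b 0 - a 0 * b 2) * x 1
      + (a 0 * b 1 - a 1 * b 0) * x 2 := by
  simp [Dt, crv, dotProduct, Fin.sum_univ_three]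

lemma Dt_self_left (a b : Fin 3 → F) : Dt a b a = 0 := by rw [Dt_expand]; ring
lemma Dt_self_right (a b : Fin 3 → F) : Dt a b b = 0 := by rw [Dt_expand]; ring
lemma Dt_cyc (a b x : Fin 3 → F) : Dt a b x = Dt b x a := by rw [Dt_expand, Dt_expand]; ring

lemma cramer3 (a b e x : Fin 3 → F) (m : Fin 3) :
    Dt a b e * x m = Dt x b e * a m + Dt a x e * b m + Dt a b x * e m := by
  fin_cases m <;> simp only [Dt_expand, Fin.mk_zero, Fin.mk_one,
    show (⟨2, by norm_num⟩ : Fin 3) = (2 : Fin 3) from rfl] <;> ring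

lemma crv_ne_zero {a b : Fin 3 → F} (ha : a ≠ 0) (hab : ∀ s : F, b ≠ s • a) :
    crv a b ≠ 0 := by
  intro hcr
  have h0 : a 1 * b 2 - a 2 * b 1 = 0 := by
    have := congrFun hcr 0; simpa [crv] using this
  have h1 : a 2 * b 0 - a 0 * b 2 = 0 := by
    have := congrFun hcr 1; simpa [crv] using this
  have h2 : a 0 * b 1 - a 1 * b 0 = 0 := by
    have := congrFun hcr 2; simpa [crv] using this
  obtain ⟨m, ham⟩ : ∃ m, a m ≠ 0 := by
    by_contra h; push_neg at h; exact ha (funext fun m => h m)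
  apply hab (b m / a m)
  funext k
  have key : b k * a m = b m * a k := by
    fin_cases m <;> fin_cases k <;>
      simp only [Fin.mk_zero, Fin.mk_one,
        show (⟨2, by norm_num⟩ : Fin 3) = (2 : Fin 3) from rfl] <;>
      first
        | ring1
        | linear_combination h0 | linear_combination -h0
        | linear_combination h1 | linear_combination -h1
        | linear_combination h2 | linear_combination -h2
  have : (b m / a m) • a k = b m * a k / a m := by
    simp [smul_eq_mul]; ring
  rw [Pi.smul_apply, this, ← key]
  field_simp

lemma dep_of_Dt_eq_zero {p r : Fin 3 → F} (hp : p ≠ 0)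
    (hpr : ∀ s : F, r ≠ s • p) (t : Fin 3 → F) (h : Dt p r t = 0) :
    ∃ α β : F, t = α • p + β • r := by
  have hcr := crv_ne_zero hp hpr
  obtain ⟨k, hk⟩ : ∃ k, crv p r k ≠ 0 := by
    by_contra hc; push_neg at hc; exact hcr (funext fun k => hc k)
  set e : Fin 3 → F := Pi.single k 1 with he
  have hΔ : Dt p r e ≠ 0 := by
    have : Dt p r e = crv p r k := by
      simp [Dt, he, dotProduct_single]
    rw [this]; exact hk
  refine ⟨Dt t r e / Dt p r e, Dt p t e / Dt p r e, ?_⟩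
  funext m
  have hcram := cramer3 p r e t m
  rw [h] at hcram
  simp only [Pi.add_apply, Pi.smul_apply, smul_eq_mul]
  field_simp
  linear_combination hcram



def pfc (u w : Fin 3 → F) : Fin 6 → F :=
  ![u 0 * w 0, u 1 * w 1, u 2 * w 2, u 0 * w 1 + u 1 * w 0,
    u 0 * w 2 + u 2 * w 0, u 1 * w 2 + u 2 * w 1]

lemma Qf_pfc (u w x : Fin 3 → F) : Qf (pfc u w) x = (u ⬝ᵥ x) * (w ⬝ᵥ x) := by
  simp only [Qf, dotProduct, Fin.sum_univ_three,
    show pfc u w 0 = u 0 * w 0 from rfl, show pfc u w 1 = u 1 * w 1 from rfl,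
    show pfc u w 2 = u 2 * w 2 from rfl, show pfc u w 3 = u 0 * w 1 + u 1 * w 0 from rfl,
    show pfc u w 4 = u 0 * w 2 + u 2 * w 0 from rfl,
    show pfc u w 5 = u 1 * w 2 + u 2 * w 1 from rfl]
  ring

lemma pol2 (c : Fin 6 → F) (a b : Fin 3 → F) (s t : F) :
    Qf c (s • a + t • b) = Qf c a * (s * s) +
      (Qf c (a + b) - Qf c a - Qf c b) * (s * t) + Qf c b * (t * t) := by
  simp only [Qf, Pi.add_apply, Pi.smul_apply, smul_eq_mul]; ring

lemma pol3 (c : Fin 6 → F) (a b e : Fin 3 → F) (s t r : F) :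
    Qf c (s • a + t • b + r • e) = Qf c a * (s * s) + Qf c b * (t * t) + Qf c e * (r * r)
      + (Qf c (a + b) - Qf c a - Qf c b) * (s * t)
      + (Qf c (a + e) - Qf c a - Qf c e) * (s * r)
      + (Qf c (b + e) - Qf c b - Qf c e) * (t * r) := by
  simp only [Qf, Pi.add_apply, Pi.smul_apply, smul_eq_mul]; ring

lemma Qf_unique {c c' : Fin 6 → F} (h : ∀ x, Qf c x = Qf c' x) : c = c' := by
  have h100 := h ![1,0,0]
  have h010 := h ![0,1,0]
  have h001 := h ![0,0,1]
  have h110 := h ![1,1,0]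
  have h101 := h ![1,0,1]
  have h011 := h ![0,1,1]
  simp only [Qf, Matrix.cons_val_zero, Matrix.cons_val_one, Matrix.head_cons,
    Matrix.cons_val_two, Matrix.tail_cons] at h100 h010 h001 h110 h101 h011
  funext j
  fin_cases j <;>
    simp only [Fin.mk_zero, Fin.mk_one, Fin.isValue,
      show (⟨2, by norm_num⟩ : Fin 6) = 2 from rfl,
      show (⟨3, by norm_num⟩ : Fin 6) = 3 from rfl,
      show (⟨4, by norm_num⟩ : Fin 6) = 4 from rfl,
      show (⟨5, by norm_num⟩ : Fin 6) = 5 from rfl] <;>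
    first
      | linear_combination h100 - h010
      | linear_combination h100
      | linear_combination h010
      | linear_combination h001
      | linear_combination h110 - h100 - h010
      | linear_combination h101 - h100 - h001
      | linear_combination h011 - h010 - h001

lemma noline {c : Fin 6 → F} {a b : Fin 3 → F} (ha : a ≠ 0)
    (hab : ∀ s : F, b ≠ s • a)
    (h0a : Qf c a = 0) (h0b : Qf c b = 0) (h0ab : Qf c (a + b) = 0) :
    ∃ u w : Fin 3 → F, ∀ x, Qf c x = (u ⬝ᵥ x) * (w ⬝ᵥ x) := by
  have hcr := crv_ne_zero ha hab
  obtain ⟨k, hk⟩ : ∃ k, crv a b k ≠ 0 := by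
    by_contra hc; push_neg at hc; exact hcr (funext fun k => hc k)
  set e : Fin 3 → F := Pi.single k 1 with he
  have hΔ : Dt a b e ≠ 0 := by
    have : Dt a b e = crv a b k := by simp [Dt, he, dotProduct_single]
    rw [this]; exact hk
  set Δ := Dt a b e with hΔdef
  refine ⟨crv a b,
    (Δ⁻¹ * Δ⁻¹) • ((Qf c e) • crv a b + (Qf c (a + e) - Qf c e) • crv b e
      + (Qf c (b + e) - Qf c e) • crv e a), ?_⟩
  intro x
  have hx : x = (Dt b e x / Δ) • a + (Dt e a x / Δ) • b + (Dt a b x / Δ) • e := by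
    funext m
    have hcram := cramer3 a b e x m
    rw [show Dt x b e = Dt b e x from by rw [Dt_expand, Dt_expand]; ring,
       show Dt a x e = Dt e a x from by rw [Dt_expand, Dt_expand]; ring] at hcram
    simp only [Pi.add_apply, Pi.smul_apply, smul_eq_mul]
    field_simp
    linear_combination hcram
  rw [show Qf c x = Qf c ((Dt b e x / Δ) • a + (Dt e a x / Δ) • b + (Dt a b x / Δ) • e)
      from by rw [← hx], pol3]
  rw [h0a, h0b, h0ab]
  have h1 : crv a b ⬝ᵥ x = Dt a b x := rfl
  have h2 : crv b e ⬝ᵥ x = Dt b e x := rfl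
  have h3 : crv e a ⬝ᵥ x = Dt e a x := rfl
  rw [smul_dotProduct, add_dotProduct, add_dotProduct, smul_dotProduct, smul_dotProduct,
    smul_dotProduct, h1, h2, h3]
  simp only [smul_eq_mul]
  field_simp
  ring



noncomputable def polyL (u : Fin 3 → F) : MvPolynomial (Fin 3) F :=
  C (u 0) * X 0 + C (u 1) * X 1 + C (u 2) * X 2

noncomputable def polyQ (c : Fin 6 → F) : MvPolynomial (Fin 3) F :=
  C (c 0) * (X 0 * X 0) + C (c 1) * (X 1 * X 1) + C (c 2) * (X 2 * X 2) +
  C (c 3) * (X 0 * X 1) + C (c 4) * (X 0 * X 2) + C (c 5) * (X 1 * X 2)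

lemma eval_polyQ (c : Fin 6 → F) (x : Fin 3 → F) : eval x (polyQ c) = Qf c x := by
  simp [polyQ, Qf]

lemma eval_polyL (u : Fin 3 → F) (x : Fin 3 → F) : eval x (polyL u) = u ⬝ᵥ x := by
  simp [polyL, dotProduct, Fin.sum_univ_three]

lemma polyQ_isHomogeneous (c : Fin 6 → F) : (polyQ c).IsHomogeneous 2 := by
  have hX : ∀ i j : Fin 3, ∀ a : F, ((C a * (X i * X j)) :
      MvPolynomial (Fin 3) F).IsHomogeneous 2 :=
    fun i j a => ((isHomogeneous_X F i).mul (isHomogeneous_X F j)).C_mul a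
  exact (((((hX 0 0 _).add (hX 1 1 _)).add (hX 2 2 _)).add (hX 0 1 _)).add
    (hX 0 2 _)).add (hX 1 2 _)

lemma polyQ_zero : polyQ (0 : Fin 6 → F) = 0 := by simp [polyQ]

lemma polyL_mul_polyL (u w : Fin 3 → F) :
    polyL u * polyL w = polyQ (pfc u w) := by
  simp only [polyL, polyQ,
    show pfc u w 0 = u 0 * w 0 from rfl, show pfc u w 1 = u 1 * w 1 from rfl,
    show pfc u w 2 = u 2 * w 2 from rfl, show pfc u w 3 = u 0 * w 1 + u 1 * w 0 from rfl,
    show pfc u w 4 = u 0 * w 2 + u 2 * w 0 from rfl,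
    show pfc u w 5 = u 1 * w 2 + u 2 * w 1 from rfl, _root_.map_add, _root_.map_mul]
  ring1

/-- the 6 monomial exponents of degree 2 -/
noncomputable def dexp : Fin 6 → (Fin 3 →₀ ℕ) :=
  ![Finsupp.single 0 2, Finsupp.single 1 2, Finsupp.single 2 2,
    Finsupp.single 0 1 + Finsupp.single 1 1,
    Finsupp.single 0 1 + Finsupp.single 2 1,
    Finsupp.single 1 1 + Finsupp.single 2 1]

lemma dexp0 : dexp 0 = Finsupp.single 0 2 := rfl
lemma dexp1 : dexp 1 = Finsupp.single 1 2 := rfl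
lemma dexp2 : dexp 2 = Finsupp.single 2 2 := rfl
lemma dexp3 : dexp 3 = Finsupp.single 0 1 + Finsupp.single 1 1 := rfl
lemma dexp4 : dexp 4 = Finsupp.single 0 1 + Finsupp.single 2 1 := rfl
lemma dexp5 : dexp 5 = Finsupp.single 1 1 + Finsupp.single 2 1 := rfl

lemma dexp_val0 (j : Fin 6) : dexp j 0 = ![2,0,0,1,1,0] j := by
  fin_cases j <;>
    simp [dexp0, dexp1, dexp2, dexp3, dexp4, dexp5, Finsupp.single_apply,
      show (![2,0,0,1,1,0] : Fin 6 → ℕ) 4 = 1 from rfl,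
      show (![2,0,0,1,1,0] : Fin 6 → ℕ) 5 = 0 from rfl]

lemma dexp_val1 (j : Fin 6) : dexp j 1 = ![0,2,0,1,0,1] j := by
  fin_cases j <;>
    simp [dexp0, dexp1, dexp2, dexp3, dexp4, dexp5, Finsupp.single_apply,
      show (![0,2,0,1,0,1] : Fin 6 → ℕ) 4 = 0 from rfl,
      show (![0,2,0,1,0,1] : Fin 6 → ℕ) 5 = 1 from rfl]

lemma dexp_val2 (j : Fin 6) : dexp j 2 = ![0,0,2,0,1,1] j := by
  fin_cases j <;>
    simp [dexp0, dexp1, dexp2, dexp3, dexp4, dexp5, Finsupp.single_apply,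
      show (![0,0,2,0,1,1] : Fin 6 → ℕ) 4 = 1 from rfl,
      show (![0,0,2,0,1,1] : Fin 6 → ℕ) 5 = 1 from rfl]

lemma degree_sum_three (d : Fin 3 →₀ ℕ) : d.degree = d 0 + d 1 + d 2 := by
  rw [Finsupp.degree_apply]
  rw [Finset.sum_subset (Finset.subset_univ d.support)
    (fun x _ hx => Finsupp.notMem_support_iff.mp hx)]
  simp [Fin.sum_univ_three]

lemma dexp_inj : ∀ i j : Fin 6, dexp i = dexp j → i = j := by
  intro i j hij
  have e0 : (![2,0,0,1,1,0] : Fin 6 → ℕ) i = ![2,0,0,1,1,0] j := by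
    rw [← dexp_val0, ← dexp_val0, hij]
  have e1 : (![0,2,0,1,0,1] : Fin 6 → ℕ) i = ![0,2,0,1,0,1] j := by
    rw [← dexp_val1, ← dexp_val1, hij]
  have e2 : (![0,0,2,0,1,1] : Fin 6 → ℕ) i = ![0,0,2,0,1,1] j := by
    rw [← dexp_val2, ← dexp_val2, hij]
  fin_cases i <;> fin_cases j <;>
    first
      | rfl
      | (exfalso; revert e0 e1 e2; decide)

lemma mono_sq (i : Fin 3) (a : F) :
    (monomial (Finsupp.single i 2) a : MvPolynomial (Fin 3) F) = C a * (X i * X i) := by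
  rw [← C_mul_X_pow_eq_monomial]; ring

lemma mono_mix (i j : Fin 3) (a : F) :
    (monomial (Finsupp.single i 1 + Finsupp.single j 1) a : MvPolynomial (Fin 3) F)
      = C a * (X i * X j) := by
  have hX : (X i : MvPolynomial (Fin 3) F) * X j
      = monomial (Finsupp.single i 1 + Finsupp.single j 1) 1 := by
    show monomial (Finsupp.single i 1) (1 : F) * monomial (Finsupp.single j 1) 1 = _
    rw [monomial_mul, one_mul]
  rw [hX, C_mul_monomial, mul_one]

lemma exists_polyQ_repr (f : MvPolynomial (Fin 3) F) (hf : f.IsHomogeneous 2) :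
    ∃ c : Fin 6 → F, f = polyQ c := by
  classical
  refine ⟨fun j => coeff (dexp j) f, ?_⟩
  have hsupp : f.support ⊆ Finset.univ.image dexp := by
    intro d hd
    have hdeg : d.degree = 2 := by
      by_contra hne
      exact (MvPolynomial.mem_support_iff.mp hd) (hf.coeff_eq_zero hne)
    rw [degree_sum_three] at hdeg
    have mem : ∀ j : Fin 6, d = dexp j → d ∈ Finset.univ.image dexp :=
      fun j hj => hj ▸ Finset.mem_image_of_mem _ (Finset.mem_univ _)
    have hcase : (d 0 = 2 ∧ d 1 = 0 ∧ d 2 = 0) ∨ (d 0 = 0 ∧ d 1 = 2 ∧ d 2 = 0)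
        ∨ (d 0 = 0 ∧ d 1 = 0 ∧ d 2 = 2) ∨ (d 0 = 1 ∧ d 1 = 1 ∧ d 2 = 0)
        ∨ (d 0 = 1 ∧ d 1 = 0 ∧ d 2 = 1) ∨ (d 0 = 0 ∧ d 1 = 1 ∧ d 2 = 1) := by omega
    rcases hcase with h | h | h | h | h | h
    · refine mem 0 ?_
      ext m
      fin_cases m <;>
        simp only [Fin.mk_zero, Fin.mk_one,
          show (⟨2, by norm_num⟩ : Fin 3) = (2 : Fin 3) from rfl] <;>
        first
          | (rw [h.1, dexp_val0]; rfl)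
          | (rw [h.2.1, dexp_val1]; rfl)
          | (rw [h.2.2, dexp_val2]; rfl)
    · refine mem 1 ?_
      ext m
      fin_cases m <;>
        simp only [Fin.mk_zero, Fin.mk_one,
          show (⟨2, by norm_num⟩ : Fin 3) = (2 : Fin 3) from rfl] <;>
        first
          | (rw [h.1, dexp_val0]; rfl)
          | (rw [h.2.1, dexp_val1]; rfl)
          | (rw [h.2.2, dexp_val2]; rfl)
    · refine mem 2 ?_
      ext m
      fin_cases m <;>
        simp only [Fin.mk_zero, Fin.mk_one,
          show (⟨2, by norm_num⟩ : Fin 3) = (2 : Fin 3) from rfl] <;>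
        first
          | (rw [h.1, dexp_val0]; rfl)
          | (rw [h.2.1, dexp_val1]; rfl)
          | (rw [h.2.2, dexp_val2]; rfl)
    · refine mem 3 ?_
      ext m
      fin_cases m <;>
        simp only [Fin.mk_zero, Fin.mk_one,
          show (⟨2, by norm_num⟩ : Fin 3) = (2 : Fin 3) from rfl] <;>
        first
          | (rw [h.1, dexp_val0]; rfl)
          | (rw [h.2.1, dexp_val1]; rfl)
          | (rw [h.2.2, dexp_val2]; rfl)
    · refine mem 4 ?_
      ext m
      fin_cases m <;>
        simp only [Fin.mk_zero, Fin.mk_one,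
          show (⟨2, by norm_num⟩ : Fin 3) = (2 : Fin 3) from rfl] <;>
        first
          | (rw [h.1, dexp_val0]; rfl)
          | (rw [h.2.1, dexp_val1]; rfl)
          | (rw [h.2.2, dexp_val2]; rfl)
    · refine mem 5 ?_
      ext m
      fin_cases m <;>
        simp only [Fin.mk_zero, Fin.mk_one,
          show (⟨2, by norm_num⟩ : Fin 3) = (2 : Fin 3) from rfl] <;>
        first
          | (rw [h.1, dexp_val0]; rfl)
          | (rw [h.2.1, dexp_val1]; rfl)
          | (rw [h.2.2, dexp_val2]; rfl)
  have hsum : f = ∑ j : Fin 6, monomial (dexp j) (coeff (dexp j) f) := by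
    conv_lhs => rw [← support_sum_monomial_coeff f]
    rw [Finset.sum_subset hsupp (fun d _ hd => by
      rw [MvPolynomial.notMem_support_iff.mp hd]; exact monomial_zero)]
    exact Finset.sum_image (fun i _ j _ h => dexp_inj i j h)
  conv_lhs => rw [hsum]
  simp only [polyQ, Fin.sum_univ_six]
  rw [dexp0, dexp1, dexp2, dexp3, dexp4, dexp5,
    mono_sq, mono_sq, mono_sq, mono_mix, mono_mix, mono_mix]

lemma mono_lin (i : Fin 3) (a : F) :
    (monomial (Finsupp.single i 1) a : MvPolynomial (Fin 3) F) = C a * X i := by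
  rw [← C_mul_X_pow_eq_monomial, pow_one]

lemma exists_polyL_repr (f : MvPolynomial (Fin 3) F) (hf : f.IsHomogeneous 1) :
    ∃ u : Fin 3 → F, f = polyL u := by
  classical
  refine ⟨fun m => coeff (Finsupp.single m 1) f, ?_⟩
  have hsupp : f.support ⊆ Finset.univ.image (fun m : Fin 3 => Finsupp.single m 1) := by
    intro d hd
    have hdeg : d.degree = 1 := by
      by_contra hne
      exact (MvPolynomial.mem_support_iff.mp hd) (hf.coeff_eq_zero hne)
    rw [degree_sum_three] at hdeg
    have mem : ∀ m : Fin 3, d = Finsupp.single m 1 →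
        d ∈ Finset.univ.image (fun m : Fin 3 => Finsupp.single m 1) :=
      fun m hm => hm ▸ Finset.mem_image_of_mem _ (Finset.mem_univ _)
    have hcase : (d 0 = 1 ∧ d 1 = 0 ∧ d 2 = 0) ∨ (d 0 = 0 ∧ d 1 = 1 ∧ d 2 = 0)
        ∨ (d 0 = 0 ∧ d 1 = 0 ∧ d 2 = 1) := by omega
    rcases hcase with h | h | h
    · refine mem 0 ?_
      ext m
      fin_cases m <;>
        simp only [Fin.mk_zero, Fin.mk_one,
          show (⟨2, by norm_num⟩ : Fin 3) = (2 : Fin 3) from rfl] <;>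
        simp [Finsupp.single_apply, h.1, h.2.1, h.2.2]
    · refine mem 1 ?_
      ext m
      fin_cases m <;>
        simp only [Fin.mk_zero, Fin.mk_one,
          show (⟨2, by norm_num⟩ : Fin 3) = (2 : Fin 3) from rfl] <;>
        simp [Finsupp.single_apply, h.1, h.2.1, h.2.2]
    · refine mem 2 ?_
      ext m
      fin_cases m <;>
        simp only [Fin.mk_zero, Fin.mk_one,
          show (⟨2, by norm_num⟩ : Fin 3) = (2 : Fin 3) from rfl] <;>
        simp [Finsupp.single_apply, h.1, h.2.1, h.2.2]
  have hsum : f = ∑ m : Fin 3, monomial (Finsupp.single m 1) (coeff (Finsupp.single m 1) f) := by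
    conv_lhs => rw [← support_sum_monomial_coeff f]
    rw [Finset.sum_subset hsupp (fun d _ hd => by
      rw [MvPolynomial.notMem_support_iff.mp hd]; exact monomial_zero)]
    exact Finset.sum_image (fun i _ j _ h => Finsupp.single_left_injective one_ne_zero h)
  conv_lhs => rw [hsum]
  simp only [polyL, Fin.sum_univ_three]
  rw [mono_lin, mono_lin, mono_lin]

lemma not_isUnit_polyL_map {K : Type*} [Field K] (φ : F →+* K) (u : Fin 3 → F) :
    ¬ IsUnit (MvPolynomial.map φ (polyL u)) := by
  intro h
  have h0 : constantCoeff (MvPolynomial.map φ (polyL u)) = 0 := by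
    simp [polyL]
  have h1 := h.map (constantCoeff (σ := Fin 3) (R := K))
  rw [h0] at h1
  exact not_isUnit_zero h1

lemma conic_not_collinear {g : MvPolynomial (Fin 3) F}
    (hg2 : g.IsHomogeneous 2)
    (hirr : Irreducible (MvPolynomial.map (algebraMap F (AlgebraicClosure F)) g))
    {a b t : Fin 3 → F} (ha : a ≠ 0)
    (hab : ∀ s : F, b ≠ s • a) (hta : ∀ s : F, t ≠ s • a) (htb : ∀ s : F, t ≠ s • b)
    (h0a : eval a g = 0) (h0b : eval b g = 0) (h0t : eval t g = 0)
    (α β : F) (htab : t = α • a + β • b) : False := by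
  obtain ⟨c, rfl⟩ := exists_polyQ_repr g hg2
  rw [eval_polyQ] at h0a h0b h0t
  have hα : α ≠ 0 := by
    rintro rfl
    rw [zero_smul, zero_add] at htab
    exact htb β htab
  have hβ : β ≠ 0 := by
    rintro rfl
    rw [zero_smul, add_zero] at htab
    exact hta α htab
  have hQab : Qf c (a + b) = 0 := by
    have hpol := pol2 c a b α β
    rw [← htab, h0t, h0a, h0b] at hpol
    have h2 : Qf c (a + b) * (α * β) = 0 := by linear_combination -hpol
    exact (mul_eq_zero.mp h2).resolve_right (mul_ne_zero hα hβ)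
  obtain ⟨u, w, hf⟩ := noline ha hab h0a h0b hQab
  have hc : c = pfc u w := Qf_unique (fun x => by rw [hf x, ← Qf_pfc])
  have hfac : polyQ c = polyL u * polyL w := by rw [hc, polyL_mul_polyL]
  rcases hirr.isUnit_or_isUnit (by rw [hfac, _root_.map_mul]) with h | h
  · exact not_isUnit_polyL_map _ u h
  · exact not_isUnit_polyL_map _ w h

lemma star {q : Fin 6 → Fin 3 → F}
    (Hgood : ∀ i₀ i₁ : Fin 6, i₀ ≠ i₁ → ∃ cδ : Fin 6 → F,
      (∀ i, i ≠ i₀ → i ≠ i₁ → Qf cδ (q i) = 0) ∧ Qf cδ (q i₁) ≠ 0)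
    (v : Fin 6 → F) (hv : ∀ c : Fin 6 → F, ∑ i, Qf c (q i) * v i = 0)
    {i₀ : Fin 6} (h0 : v i₀ = 0) : v = 0 := by
  funext i₁
  show v i₁ = 0
  by_cases hi : i₁ = i₀
  · rw [hi]; exact h0
  obtain ⟨cδ, hvan, hnz⟩ := Hgood i₀ i₁ (fun h => hi h.symm)
  have hs := hv cδ
  rw [Finset.sum_eq_single i₁ (fun b _ hb => ?_)
    (fun h => absurd (Finset.mem_univ i₁) h)] at hs
  · exact (mul_eq_zero.mp hs).resolve_left hnz
  · by_cases hbi : b = i₀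
    · rw [hbi, h0, mul_zero]
    · rw [hvan b hbi hb, zero_mul]

lemma match3 {p1 p2 p3 p4 : Prop} (h123 : ¬(p1 ∧ p2 ∧ p3)) (h124 : ¬(p1 ∧ p2 ∧ p4))
    (h134 : ¬(p1 ∧ p3 ∧ p4)) (h234 : ¬(p2 ∧ p3 ∧ p4)) :
    (¬(p1 ∧ p2) ∧ ¬(p3 ∧ p4)) ∨ (¬(p1 ∧ p3) ∧ ¬(p2 ∧ p4)) ∨ (¬(p1 ∧ p4) ∧ ¬(p2 ∧ p3)) := by
  tauto

lemma pair_valid {x y t : Fin 3 → F} (hx0 : x ≠ 0) (hxy : ∀ s : F, y ≠ s • x)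
    (htx : ∀ s : F, t ≠ s • x) (hty : ∀ s : F, t ≠ s • y)
    {ua ub : Fin 3 → F}
    (hta : ua ⬝ᵥ t = 0) (htb : ub ⬝ᵥ t ≠ 0)
    (hOx : ua ⬝ᵥ x = 0 ∨ ub ⬝ᵥ x = 0) (hOy : ua ⬝ᵥ y = 0 ∨ ub ⬝ᵥ y = 0)
    (hnot : ¬(ua ⬝ᵥ x = 0 ∧ ua ⬝ᵥ y = 0)) :
    Dt x y t ≠ 0 := by
  intro hD
  obtain ⟨α, β, ht⟩ := dep_of_Dt_eq_zero hx0 hxy t hD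
  have hdot : ∀ u : Fin 3 → F, u ⬝ᵥ t = α * (u ⬝ᵥ x) + β * (u ⬝ᵥ y) := by
    intro u
    rw [ht]
    simp only [dotProduct, Fin.sum_univ_three, Pi.add_apply, Pi.smul_apply, smul_eq_mul]
    ring
  by_cases hax : ua ⬝ᵥ x = 0
  · have hay : ua ⬝ᵥ y ≠ 0 := fun h => hnot ⟨hax, h⟩
    have hu := hdot ua
    rw [hta, hax] at hu
    have hβ : β = 0 := by
      have h2 : β * (ua ⬝ᵥ y) = 0 := by linear_combination -hu
      exact (mul_eq_zero.mp h2).resolve_right hay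
    rw [hβ, zero_smul, add_zero] at ht
    exact htx α ht
  · by_cases hay : ua ⬝ᵥ y = 0
    · have hu := hdot ua
      rw [hta, hay] at hu
      have hα : α = 0 := by
        have h2 : α * (ua ⬝ᵥ x) = 0 := by linear_combination -hu
        exact (mul_eq_zero.mp h2).resolve_right hax
      rw [hα, zero_smul, zero_add] at ht
      exact hty β ht
    · have hbx : ub ⬝ᵥ x = 0 := hOx.resolve_left hax
      have hby : ub ⬝ᵥ y = 0 := hOy.resolve_left hay
      have hu := hdot ub
      rw [hbx, hby] at hu
      rw [mul_zero, mul_zero, add_zero] at hu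
      exact htb hu

lemma compl_four (i₀ i₁ : Fin 6) (hne : i₀ ≠ i₁) :
    ∃ j1 j2 j3 j4 : Fin 6, j1 ≠ j2 ∧ j1 ≠ j3 ∧ j1 ≠ j4 ∧ j2 ≠ j3 ∧ j2 ≠ j4 ∧ j3 ≠ j4 ∧
      j1 ≠ i₀ ∧ j1 ≠ i₁ ∧ j2 ≠ i₀ ∧ j2 ≠ i₁ ∧ j3 ≠ i₀ ∧ j3 ≠ i₁ ∧ j4 ≠ i₀ ∧ j4 ≠ i₁ ∧
      (∀ i : Fin 6, i ≠ i₀ → i ≠ i₁ → (i = j1 ∨ i = j2 ∨ i = j3 ∨ i = j4)) := by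
  classical
  set s : Finset (Fin 6) := Finset.univ \ {i₀, i₁} with hs
  have hmem : ∀ i : Fin 6, i ∈ s ↔ (i ≠ i₀ ∧ i ≠ i₁) := by
    intro i; simp [hs]
  have hcard : s.card = 4 := by
    rw [hs, Finset.card_sdiff_of_subset (Finset.subset_univ _),
      Finset.card_insert_of_notMem (by simp [hne]), Finset.card_singleton]
    simp
  obtain ⟨j1, t1, hn1, he1, hc1⟩ := Finset.card_eq_succ.mp (show s.card = 3 + 1 from hcard)
  obtain ⟨j2, t2, hn2, he2, hc2⟩ := Finset.card_eq_succ.mp (show t1.card = 2 + 1 from hc1)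
  obtain ⟨j3, t3, hn3, he3, hc3⟩ := Finset.card_eq_succ.mp (show t2.card = 1 + 1 from hc2)
  obtain ⟨j4, t4, hn4, he4, hc4⟩ := Finset.card_eq_succ.mp (show t3.card = 0 + 1 from hc3)
  have ht4 : t4 = ∅ := Finset.card_eq_zero.mp hc4
  rw [ht4] at he4
  rw [← he4] at he3
  rw [← he3] at he2
  rw [← he2] at he1
  -- he1 : insert j1 (insert j2 (insert j3 (insert j4 ∅))) = s
  have hj1s : j1 ∈ s := by rw [← he1]; simp
  have hj2s : j2 ∈ s := by rw [← he1]; simp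
  have hj3s : j3 ∈ s := by rw [← he1]; simp
  have hj4s : j4 ∈ s := by rw [← he1]; simp
  rw [← he2] at hn1
  rw [← he3] at hn2
  rw [← he4] at hn3
  simp only [Finset.mem_insert, Finset.mem_singleton, Finset.notMem_empty,
    not_or] at hn1 hn2 hn3
  refine ⟨j1, j2, j3, j4, hn1.1, hn1.2.1, by simpa using hn1.2.2, hn2.1, by simpa using hn2.2,
    by simpa using hn3, ((hmem j1).mp hj1s).1, ((hmem j1).mp hj1s).2,
    ((hmem j2).mp hj2s).1, ((hmem j2).mp hj2s).2,
    ((hmem j3).mp hj3s).1, ((hmem j3).mp hj3s).2,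
    ((hmem j4).mp hj4s).1, ((hmem j4).mp hj4s).2, ?_⟩
  intro i hi0 hi1
  have his : i ∈ s := (hmem i).mpr ⟨hi0, hi1⟩
  rw [← he1] at his
  simpa using his

set_option maxHeartbeats 1000000 in
lemma hgood_conic {g : MvPolynomial (Fin 3) F} (hg2 : g.IsHomogeneous 2)
    (hirr : Irreducible (MvPolynomial.map (algebraMap F (AlgebraicClosure F)) g))
    {q : Fin 6 → Fin 3 → F}
    (hq0 : ∀ i, q i ≠ 0) (hqnp : ∀ i j : Fin 6, i ≠ j → ∀ s : F, q i ≠ s • q j)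
    (hvan : ∀ i, eval (q i) g = 0) :
    ∀ i₀ i₁ : Fin 6, i₀ ≠ i₁ → ∃ cδ : Fin 6 → F,
      (∀ i, i ≠ i₀ → i ≠ i₁ → Qf cδ (q i) = 0) ∧ Qf cδ (q i₁) ≠ 0 := by
  intro i₀ i₁ hne
  obtain ⟨j1, j2, j3, j4, h12, h13, h14, h23, h24, h34,
    h10, h11, h20, h21, h30, h31, h40, h41, hcov⟩ := compl_four i₀ i₁ hne
  have hD1 : Dt (q j1) (q j2) (q i₁) ≠ 0 := by
    intro hD
    obtain ⟨α, β, ht⟩ := dep_of_Dt_eq_zero (hq0 j1)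
      (fun s => hqnp j2 j1 (Ne.symm h12) s) (q i₁) hD
    exact conic_not_collinear hg2 hirr (hq0 j1)
      (fun s => hqnp j2 j1 (Ne.symm h12) s) (fun s => hqnp i₁ j1 (Ne.symm h11) s)
      (fun s => hqnp i₁ j2 (Ne.symm h21) s) (hvan j1) (hvan j2) (hvan i₁) α β ht
  have hD2 : Dt (q j3) (q j4) (q i₁) ≠ 0 := by
    intro hD
    obtain ⟨α, β, ht⟩ := dep_of_Dt_eq_zero (hq0 j3)
      (fun s => hqnp j4 j3 (Ne.symm h34) s) (q i₁) hD
    exact conic_not_collinear hg2 hirr (hq0 j3)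
      (fun s => hqnp j4 j3 (Ne.symm h34) s) (fun s => hqnp i₁ j3 (Ne.symm h31) s)
      (fun s => hqnp i₁ j4 (Ne.symm h41) s) (hvan j3) (hvan j4) (hvan i₁) α β ht
  refine ⟨pfc (crv (q j1) (q j2)) (crv (q j3) (q j4)), ?_, ?_⟩
  · intro i hi0 hi1
    rw [Qf_pfc]
    rcases hcov i hi0 hi1 with h | h | h | h <;> rw [h]
    · rw [show crv (q j1) (q j2) ⬝ᵥ q j1 = Dt (q j1) (q j2) (q j1) from rfl,
        Dt_self_left, zero_mul]
    · rw [show crv (q j1) (q j2) ⬝ᵥ q j2 = Dt (q j1) (q j2) (q j2) from rfl,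
        Dt_self_right, zero_mul]
    · rw [show crv (q j3) (q j4) ⬝ᵥ q j3 = Dt (q j3) (q j4) (q j3) from rfl,
        Dt_self_left, mul_zero]
    · rw [show crv (q j3) (q j4) ⬝ᵥ q j4 = Dt (q j3) (q j4) (q j4) from rfl,
        Dt_self_right, mul_zero]
  · rw [Qf_pfc]
    exact mul_ne_zero hD1 hD2

lemma hgood_lines_core {q : Fin 6 → Fin 3 → F}
    (hq0 : ∀ i, q i ≠ 0) (hqnp : ∀ i j : Fin 6, i ≠ j → ∀ s : F, q i ≠ s • q j)
    {ua ub : Fin 3 → F}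
    (hor : ∀ i, ua ⬝ᵥ q i = 0 ∨ ub ⬝ᵥ q i = 0)
    (hnboth : ∀ i, ¬(ua ⬝ᵥ q i = 0 ∧ ub ⬝ᵥ q i = 0))
    (i₀ i₁ x y z w : Fin 6)
    (hxy : x ≠ y) (hzw : z ≠ w) (hx1 : x ≠ i₁) (hy1 : y ≠ i₁) (hz1 : z ≠ i₁) (hw1 : w ≠ i₁)
    (hcov : ∀ i : Fin 6, i ≠ i₀ → i ≠ i₁ → (i = x ∨ i = y ∨ i = z ∨ i = w))
    (hi₁ : ua ⬝ᵥ q i₁ = 0)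
    (hvx : ¬(ua ⬝ᵥ q x = 0 ∧ ua ⬝ᵥ q y = 0))
    (hvz : ¬(ua ⬝ᵥ q z = 0 ∧ ua ⬝ᵥ q w = 0)) :
    ∃ cδ : Fin 6 → F,
      (∀ i, i ≠ i₀ → i ≠ i₁ → Qf cδ (q i) = 0) ∧ Qf cδ (q i₁) ≠ 0 := by
  have htb : ub ⬝ᵥ q i₁ ≠ 0 := fun h => hnboth i₁ ⟨hi₁, h⟩
  have hD1 : Dt (q x) (q y) (q i₁) ≠ 0 :=
    pair_valid (hq0 x) (fun s => hqnp y x (Ne.symm hxy) s)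
      (fun s => hqnp i₁ x (Ne.symm hx1) s) (fun s => hqnp i₁ y (Ne.symm hy1) s)
      hi₁ htb (hor x) (hor y) hvx
  have hD2 : Dt (q z) (q w) (q i₁) ≠ 0 :=
    pair_valid (hq0 z) (fun s => hqnp w z (Ne.symm hzw) s)
      (fun s => hqnp i₁ z (Ne.symm hz1) s) (fun s => hqnp i₁ w (Ne.symm hw1) s)
      hi₁ htb (hor z) (hor w) hvz
  refine ⟨pfc (crv (q x) (q y)) (crv (q z) (q w)), ?_, ?_⟩
  · intro i hi0 hi1
    rw [Qf_pfc]
    rcases hcov i hi0 hi1 with h | h | h | h <;> rw [h]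
    · rw [show crv (q x) (q y) ⬝ᵥ q x = Dt (q x) (q y) (q x) from rfl, Dt_self_left, zero_mul]
    · rw [show crv (q x) (q y) ⬝ᵥ q y = Dt (q x) (q y) (q y) from rfl, Dt_self_right, zero_mul]
    · rw [show crv (q z) (q w) ⬝ᵥ q z = Dt (q z) (q w) (q z) from rfl, Dt_self_left, mul_zero]
    · rw [show crv (q z) (q w) ⬝ᵥ q w = Dt (q z) (q w) (q w) from rfl, Dt_self_right, mul_zero]
  · rw [Qf_pfc]
    exact mul_ne_zero hD1 hD2

set_option maxHeartbeats 1000000 in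
lemma hgood_lines {q : Fin 6 → Fin 3 → F}
    (hq0 : ∀ i, q i ≠ 0) (hqnp : ∀ i j : Fin 6, i ≠ j → ∀ s : F, q i ≠ s • q j)
    {ua ub : Fin 3 → F}
    (hor : ∀ i, ua ⬝ᵥ q i = 0 ∨ ub ⬝ᵥ q i = 0)
    (hnboth : ∀ i, ¬(ua ⬝ᵥ q i = 0 ∧ ub ⬝ᵥ q i = 0))
    (i₀ i₁ : Fin 6) (hne : i₀ ≠ i₁) (hi₁ : ua ⬝ᵥ q i₁ = 0)
    (hmax : ∀ x y z : Fin 6, x ≠ y → x ≠ z → y ≠ z → x ≠ i₁ → y ≠ i₁ → z ≠ i₁ →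
      ¬(ua ⬝ᵥ q x = 0 ∧ ua ⬝ᵥ q y = 0 ∧ ua ⬝ᵥ q z = 0)) :
    ∃ cδ : Fin 6 → F,
      (∀ i, i ≠ i₀ → i ≠ i₁ → Qf cδ (q i) = 0) ∧ Qf cδ (q i₁) ≠ 0 := by
  obtain ⟨j1, j2, j3, j4, h12, h13, h14, h23, h24, h34,
    h10, h11, h20, h21, h30, h31, h40, h41, hcov⟩ := compl_four i₀ i₁ hne
  have hm := match3 (hmax j1 j2 j3 h12 h13 h23 h11 h21 h31)
    (hmax j1 j2 j4 h12 h14 h24 h11 h21 h41)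
    (hmax j1 j3 j4 h13 h14 h34 h11 h31 h41)
    (hmax j2 j3 j4 h23 h24 h34 h21 h31 h41)
  rcases hm with ⟨hv1, hv2⟩ | ⟨hv1, hv2⟩ | ⟨hv1, hv2⟩
  · exact hgood_lines_core hq0 hqnp hor hnboth i₀ i₁ j1 j2 j3 j4 h12 h34 h11 h21 h31 h41
      hcov hi₁ hv1 hv2
  · exact hgood_lines_core hq0 hqnp hor hnboth i₀ i₁ j1 j3 j2 j4 h13 h24 h11 h31 h21 h41
      (fun i a b => by rcases hcov i a b with h | h | h | h <;> tauto) hi₁ hv1 hv2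
  · exact hgood_lines_core hq0 hqnp hor hnboth i₀ i₁ j1 j4 j2 j3 h14 h23 h11 h41 h21 h31
      (fun i a b => by rcases hcov i a b with h | h | h | h <;> tauto) hi₁ hv1 hv2

def mon (j : Fin 6) (x : Fin 3 → F) : F :=
  ![x 0 * x 0, x 1 * x 1, x 2 * x 2, x 0 * x 1, x 0 * x 2, x 1 * x 2] j

lemma Qf_eq_sum_mon (c : Fin 6 → F) (x : Fin 3 → F) :
    Qf c x = ∑ j, c j * mon j x := by
  rw [Fin.sum_univ_six]
  simp only [mon,
    show (![x 0 * x 0, x 1 * x 1, x 2 * x 2, x 0 * x 1, x 0 * x 2, x 1 * x 2]) 0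
      = x 0 * x 0 from rfl,
    show (![x 0 * x 0, x 1 * x 1, x 2 * x 2, x 0 * x 1, x 0 * x 2, x 1 * x 2]) 1
      = x 1 * x 1 from rfl,
    show (![x 0 * x 0, x 1 * x 1, x 2 * x 2, x 0 * x 1, x 0 * x 2, x 1 * x 2]) 2
      = x 2 * x 2 from rfl,
    show (![x 0 * x 0, x 1 * x 1, x 2 * x 2, x 0 * x 1, x 0 * x 2, x 1 * x 2]) 3
      = x 0 * x 1 from rfl,
    show (![x 0 * x 0, x 1 * x 1, x 2 * x 2, x 0 * x 1, x 0 * x 2, x 1 * x 2]) 4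
      = x 0 * x 2 from rfl,
    show (![x 0 * x 0, x 1 * x 1, x 2 * x 2, x 0 * x 1, x 0 * x 2, x 1 * x 2]) 5
      = x 1 * x 2 from rfl, Qf]

end DCAux

lemma coordPairing_apply {F : Type*} [Field F] {ι : Type*} [Fintype ι] (a w : ι → F) :
    coordPairing a w = ∑ i, a i * w i := by
  simp [coordPairing, LinearMap.sum_apply, LinearMap.smul_apply, LinearMap.proj_apply,
    smul_eq_mul]

open DCAux Matrix in
set_option maxHeartbeats 2000000 in
/-- Let `S` be a set of `6` points of `P²(F_q)` lying on a smooth conic, or `6` points lying on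
two `F_q`-rational lines with `3` points on each line and not including the intersection point of
the lines.  Then the space `V_S` of codewords of `C_{2,2}^⊥` supported on `S` is `1`-dimensional,
and every nonzero element of `V_S` has weight exactly `6`. -/
theorem dual_conic_codewords_on_six_points (F : Type*) [Field F] [Fintype F]
    [Fintype (Projectivization F (Fin 3 → F))]
    (S : Finset (Projectivization F (Fin 3 → F))) (hS6 : S.card = 6)
    (hconfig :
      (∃ g : MvPolynomial (Fin 3) F, g.IsHomogeneous 2 ∧
        Irreducible (MvPolynomial.map (algebraMap F (AlgebraicClosure F)) g) ∧
        ∀ p ∈ S, eval p.rep g = 0) ∨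
      (∃ ℓ₁ ℓ₂ : MvPolynomial (Fin 3) F, ℓ₁ ≠ 0 ∧ ℓ₂ ≠ 0 ∧
        ℓ₁.IsHomogeneous 1 ∧ ℓ₂.IsHomogeneous 1 ∧ (¬ ∃ a : F, ℓ₂ = C a * ℓ₁) ∧
        Nat.card {p : Projectivization F (Fin 3 → F) | p ∈ S ∧ eval p.rep ℓ₁ = 0} = 3 ∧
        Nat.card {p : Projectivization F (Fin 3 → F) | p ∈ S ∧ eval p.rep ℓ₂ = 0} = 3 ∧
        (∀ p ∈ S, eval p.rep ℓ₁ = 0 ∨ eval p.rep ℓ₂ = 0) ∧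
        ∀ p ∈ S, ¬ (eval p.rep ℓ₁ = 0 ∧ eval p.rep ℓ₂ = 0))) :
    Module.finrank F ↥(dualRMCode F 2 ⊓
        ⨅ p ∈ ((↑S : Set (Projectivization F (Fin 3 → F)))ᶜ),
          LinearMap.ker (LinearMap.proj (R := F) (φ := fun _ => F) p)) = 1 ∧
      ∀ c ∈ dualRMCode F 2 ⊓
          ⨅ p ∈ ((↑S : Set (Projectivization F (Fin 3 → F)))ᶜ),
            LinearMap.ker (LinearMap.proj (R := F) (φ := fun _ => F) p),
        c ≠ 0 → Nat.card {p | c p ≠ 0} = 6 := by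
  classical
  have hS6' : Fintype.card {x // x ∈ S} = 6 := by rw [Fintype.card_coe]; exact hS6
  set ε := Fintype.equivFinOfCardEq hS6' with hε
  set pt : Fin 6 → Projectivization F (Fin 3 → F) := fun i => ↑(ε.symm i) with hpt
  set q : Fin 6 → (Fin 3 → F) := fun i => (pt i).rep with hqdef
  have hptmem : ∀ i, pt i ∈ S := fun i => (ε.symm i).2
  have hptinj : Function.Injective pt := by
    intro i j hij
    have h2 : ε.symm i = ε.symm j := Subtype.ext hij
    simpa using congrArg ε h2
  have hptsurj : ∀ p ∈ S, ∃ i, pt i = p := by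
    intro p hp
    refine ⟨ε ⟨p, hp⟩, ?_⟩
    rw [hpt]
    simp
  have hq0 : ∀ i, q i ≠ 0 := fun i => Projectivization.rep_nonzero _
  have hqnp : ∀ i j : Fin 6, i ≠ j → ∀ s : F, q i ≠ s • q j := by
    intro i j hij s h
    have hs : s ≠ 0 := by rintro rfl; rw [zero_smul] at h; exact hq0 i h
    have hpp : pt i = pt j := by
      rw [← Projectivization.mk_rep (pt i), ← Projectivization.mk_rep (pt j)]
      exact (Projectivization.mk_eq_mk_iff' F _ _ _ _).mpr ⟨s, h.symm⟩
    exact hij (hptinj hpp)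
  -- sum conversion
  have hsum_convert : ∀ (w : Projectivization F (Fin 3 → F) → F), (∀ p ∉ S, w p = 0) →
      ∀ A : Projectivization F (Fin 3 → F) → F,
      ∑ p, A p * w p = ∑ i : Fin 6, A (pt i) * w (pt i) := by
    intro w hw A
    rw [← Finset.sum_subset (Finset.subset_univ S)
      (fun p _ hp => by rw [hw p hp, mul_zero])]
    rw [← Finset.sum_coe_sort S (fun p => A p * w p)]
    exact (Equiv.sum_comp ε.symm fun x => A ↑x * w ↑x).symm
  -- membership characterization
  have memW : ∀ w : Projectivization F (Fin 3 → F) → F,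
      (w ∈ dualRMCode F 2 ⊓
        ⨅ p ∈ ((↑S : Set (Projectivization F (Fin 3 → F)))ᶜ),
          LinearMap.ker (LinearMap.proj (R := F) (φ := fun _ => F) p)) ↔
      ((∀ p ∉ S, w p = 0) ∧
        ∀ c : Fin 6 → F, ∑ i : Fin 6, Qf c (q i) * w (pt i) = 0) := by
    intro w
    rw [Submodule.mem_inf]
    constructor
    · rintro ⟨h1, h2⟩
      simp only [Submodule.mem_iInf, LinearMap.mem_ker, LinearMap.proj_apply] at h2
      have hsupp : ∀ p ∉ S, w p = 0 := fun p hp => h2 p (by simpa using hp)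
      refine ⟨hsupp, fun c => ?_⟩
      simp only [dualRMCode, Submodule.mem_iInf, Set.mem_setOf_eq, LinearMap.mem_ker] at h1
      have hf := h1 (polyQ c) (polyQ_isHomogeneous c)
      rw [coordPairing_apply] at hf
      have hconv : ∑ p, eval p.rep (polyQ c) * w p
          = ∑ i : Fin 6, Qf c (q i) * w (pt i) := by
        calc ∑ p, eval p.rep (polyQ c) * w p
            = ∑ p, Qf c p.rep * w p :=
              Finset.sum_congr rfl fun p _ => by rw [eval_polyQ]
          _ = ∑ i : Fin 6, Qf c (q i) * w (pt i) := hsum_convert w hsupp _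
      rw [← hconv]
      exact hf
    · rintro ⟨hsupp, hc⟩
      constructor
      · simp only [dualRMCode, Submodule.mem_iInf, Set.mem_setOf_eq, LinearMap.mem_ker]
        intro f hf
        obtain ⟨c, rfl⟩ := exists_polyQ_repr f hf
        rw [coordPairing_apply]
        have hconv : ∑ p, eval p.rep (polyQ c) * w p
            = ∑ i : Fin 6, Qf c (q i) * w (pt i) := by
          calc ∑ p, eval p.rep (polyQ c) * w p
              = ∑ p, Qf c p.rep * w p :=
                Finset.sum_congr rfl fun p _ => by rw [eval_polyQ]
            _ = ∑ i : Fin 6, Qf c (q i) * w (pt i) := hsum_convert w hsupp _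
        rw [hconv]
        exact hc c
      · simp only [Submodule.mem_iInf, LinearMap.mem_ker, LinearMap.proj_apply]
        intro p hp
        exact hsupp p (by simpa using hp)
  -- a nonzero conic through all six points
  obtain ⟨g₀, hg₀h, hg₀ne, hg₀van⟩ : ∃ g₀ : MvPolynomial (Fin 3) F,
      g₀.IsHomogeneous 2 ∧ g₀ ≠ 0 ∧ ∀ i, eval (q i) g₀ = 0 := by
    rcases hconfig with ⟨g, hg2, hirr, hvan⟩ |
      ⟨l1, l2, h1ne, h2ne, h1h, h2h, hnpl, hcard1, hcard2, hor, hnb⟩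
    · refine ⟨g, hg2, ?_, fun i => hvan _ (hptmem i)⟩
      rintro rfl
      rw [map_zero] at hirr
      exact not_irreducible_zero hirr
    · refine ⟨l1 * l2, by simpa using h1h.mul h2h, mul_ne_zero h1ne h2ne, fun i => ?_⟩
      rw [_root_.map_mul]
      rcases hor (pt i) (hptmem i) with h | h
      · rw [show eval (q i) l1 = eval (pt i).rep l1 from rfl, h, zero_mul]
      · rw [show eval (q i) l2 = eval (pt i).rep l2 from rfl, h, mul_zero]
  obtain ⟨γ, hγ⟩ := exists_polyQ_repr g₀ hg₀h
  have hγne : γ ≠ 0 := by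
    rintro rfl
    rw [polyQ_zero] at hγ
    exact hg₀ne hγ
  -- matrix argument for existence of a nonzero annihilator vector
  set M : Matrix (Fin 6) (Fin 6) F := Matrix.of fun j i => mon j (q i) with hM
  have hMt : Matrix.mulVec Mᵀ γ = 0 := by
    funext i
    have h1 : (Mᵀ.mulVec γ) i = ∑ j, mon j (q i) * γ j := by
      simp [Matrix.mulVec, dotProduct, hM]
    have h2 : ∑ j, mon j (q i) * γ j = Qf γ (q i) := by
      rw [Qf_eq_sum_mon]
      exact Finset.sum_congr rfl fun j _ => mul_comm _ _
    have h3 : Qf γ (q i) = 0 := by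
      rw [← eval_polyQ, ← hγ]
      exact hg₀van i
    rw [h1, h2, h3]
    rfl
  have hdet : M.det = 0 := by
    have h1 : Mᵀ.det = 0 := Matrix.exists_mulVec_eq_zero_iff.mp ⟨γ, hγne, hMt⟩
    rwa [Matrix.det_transpose] at h1
  obtain ⟨v₀, hv₀ne, hv₀M⟩ := Matrix.exists_mulVec_eq_zero_iff.mpr hdet
  have hv₀K : ∀ c : Fin 6 → F, ∑ i, Qf c (q i) * v₀ i = 0 := by
    intro c
    have h1 : ∑ i, Qf c (q i) * v₀ i = ∑ j, c j * (M.mulVec v₀ j) := by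
      calc ∑ i, Qf c (q i) * v₀ i
          = ∑ i, ∑ j, c j * mon j (q i) * v₀ i := by
            refine Finset.sum_congr rfl fun i _ => ?_
            rw [Qf_eq_sum_mon, Finset.sum_mul]
        _ = ∑ j, ∑ i, c j * mon j (q i) * v₀ i := Finset.sum_comm
        _ = ∑ j, c j * (M.mulVec v₀ j) := by
            refine Finset.sum_congr rfl fun j _ => ?_
            rw [show M.mulVec v₀ j = ∑ i, mon j (q i) * v₀ i from by
              simp [Matrix.mulVec, dotProduct, hM]]
            rw [Finset.mul_sum]
            exact Finset.sum_congr rfl fun i _ => mul_assoc _ _ _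
    rw [h1, hv₀M]
    simp
  -- the good-conic property
  have Hgood : ∀ i₀ i₁ : Fin 6, i₀ ≠ i₁ → ∃ cδ : Fin 6 → F,
      (∀ i, i ≠ i₀ → i ≠ i₁ → Qf cδ (q i) = 0) ∧ Qf cδ (q i₁) ≠ 0 := by
    rcases hconfig with ⟨g, hg2, hirr, hvan⟩ |
      ⟨l1, l2, h1ne, h2ne, h1h, h2h, hnpl, hcard1, hcard2, hor, hnb⟩
    · exact hgood_conic hg2 hirr hq0 hqnp (fun i => hvan _ (hptmem i))
    · obtain ⟨u1, rfl⟩ := exists_polyL_repr l1 h1h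
      obtain ⟨u2, rfl⟩ := exists_polyL_repr l2 h2h
      have hor' : ∀ i, u1 ⬝ᵥ q i = 0 ∨ u2 ⬝ᵥ q i = 0 := by
        intro i
        rcases hor (pt i) (hptmem i) with h | h
        · left; rw [← eval_polyL]; exact h
        · right; rw [← eval_polyL]; exact h
      have hnb' : ∀ i, ¬(u1 ⬝ᵥ q i = 0 ∧ u2 ⬝ᵥ q i = 0) := by
        intro i h
        exact hnb (pt i) (hptmem i) ⟨by rw [eval_polyL]; exact h.1,
          by rw [eval_polyL]; exact h.2⟩
      -- index filter cardinalities
      have hfc : ∀ (l : MvPolynomial (Fin 3) F),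
          Nat.card {p : Projectivization F (Fin 3 → F) | p ∈ S ∧ eval p.rep l = 0} = 3 →
          (Finset.univ.filter (fun i : Fin 6 => eval (q i) l = 0)).card = 3 := by
        intro l hl
        have hset : {p : Projectivization F (Fin 3 → F) | p ∈ S ∧ eval p.rep l = 0}
            = ↑(S.filter (fun p => eval p.rep l = 0)) := by
          ext p; simp
        rw [hset, Nat.card_coe_set_eq, Set.ncard_coe_finset] at hl
        have hbij : (Finset.univ.filter (fun i : Fin 6 => eval (q i) l = 0)).card
            = (S.filter (fun p => eval p.rep l = 0)).card := by
          apply Finset.card_bij (fun i _ => pt i)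
          · intro i hi
            simp only [Finset.mem_filter] at hi ⊢
            exact ⟨hptmem i, hi.2⟩
          · intro i _ j _ hij
            exact hptinj hij
          · intro p hp
            simp only [Finset.mem_filter] at hp
            obtain ⟨i, rfl⟩ := hptsurj p hp.1
            exact ⟨i, by simp only [Finset.mem_filter]; exact ⟨Finset.mem_univ i, hp.2⟩, rfl⟩
        rw [hbij]
        exact hl
      have hmax : ∀ (u : Fin 3 → F) (l : MvPolynomial (Fin 3) F), (∀ x, eval x l = u ⬝ᵥ x) →
          (Finset.univ.filter (fun i : Fin 6 => eval (q i) l = 0)).card = 3 →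
          ∀ i₁ : Fin 6, u ⬝ᵥ q i₁ = 0 →
          ∀ x y z : Fin 6, x ≠ y → x ≠ z → y ≠ z → x ≠ i₁ → y ≠ i₁ → z ≠ i₁ →
          ¬(u ⬝ᵥ q x = 0 ∧ u ⬝ᵥ q y = 0 ∧ u ⬝ᵥ q z = 0) := by
        rintro u l hel hcard i₁ hi₁ x y z hxy hxz hyz hx1 hy1 hz1 ⟨hx, hy, hz⟩
        have hsub : ({x, y, z, i₁} : Finset (Fin 6)) ⊆
            Finset.univ.filter (fun i : Fin 6 => eval (q i) l = 0) := by
          intro m hm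
          simp only [Finset.mem_insert, Finset.mem_singleton] at hm
          simp only [Finset.mem_filter]
          refine ⟨Finset.mem_univ m, ?_⟩
          rcases hm with rfl | rfl | rfl | rfl
          · rw [hel]; exact hx
          · rw [hel]; exact hy
          · rw [hel]; exact hz
          · rw [hel]; exact hi₁
        have hc4 : ({x, y, z, i₁} : Finset (Fin 6)).card = 4 := by
          rw [Finset.card_insert_of_notMem (by simp [hxy, hxz, hx1]),
            Finset.card_insert_of_notMem (by simp [hyz, hy1]),
            Finset.card_insert_of_notMem (by simp [hz1]), Finset.card_singleton]
        have := Finset.card_le_card hsub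
        rw [hc4, hcard] at this
        omega
      intro i₀ i₁ hne
      rcases hor' i₁ with h | h
      · exact hgood_lines hq0 hqnp hor' hnb' i₀ i₁ hne h
          (hmax u1 (polyL u1) (fun x => eval_polyL u1 x) (hfc _ hcard1) i₁ h)
      · exact hgood_lines hq0 hqnp (fun i => (hor' i).symm)
          (fun i hh => hnb' i ⟨hh.2, hh.1⟩) i₀ i₁ hne h
          (hmax u2 (polyL u2) (fun x => eval_polyL u2 x) (hfc _ hcard2) i₁ h)
  -- the star property
  have hstar : ∀ v : Fin 6 → F, (∀ c, ∑ i, Qf c (q i) * v i = 0) →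
      ∀ i₀, v i₀ = 0 → v = 0 :=
    fun v hv i₀ h0 => star Hgood v hv h0
  have hv₀all : ∀ i, v₀ i ≠ 0 := fun i hi => hv₀ne (hstar v₀ hv₀K i hi)
  -- the canonical codeword
  set w₀ : Projectivization F (Fin 3 → F) → F :=
    fun p => if h : p ∈ S then v₀ (ε ⟨p, h⟩) else 0 with hw₀
  have hw₀pt : ∀ i, w₀ (pt i) = v₀ i := by
    intro i
    rw [hw₀]
    simp only
    rw [dif_pos (hptmem i)]
    congr 1
    have h2 : (⟨pt i, hptmem i⟩ : {x // x ∈ S}) = ε.symm i := Subtype.ext rfl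
    rw [h2, Equiv.apply_symm_apply]
  have hw₀supp : ∀ p ∉ S, w₀ p = 0 := by
    intro p hp
    rw [hw₀]
    simp only
    rw [dif_neg hp]
  have hw₀W : w₀ ∈ dualRMCode F 2 ⊓
      ⨅ p ∈ ((↑S : Set (Projectivization F (Fin 3 → F)))ᶜ),
        LinearMap.ker (LinearMap.proj (R := F) (φ := fun _ => F) p) := by
    refine (memW w₀).mpr ⟨hw₀supp, fun c => ?_⟩
    rw [Finset.sum_congr rfl (fun i _ => by rw [hw₀pt i] :
      ∀ i ∈ Finset.univ, Qf c (q i) * w₀ (pt i) = Qf c (q i) * v₀ i)]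
    exact hv₀K c
  have hw₀ne : w₀ ≠ 0 := by
    intro h
    apply hv₀all 0
    rw [← hw₀pt 0, h]
    rfl
  constructor
  · -- dimension 1
    have hWspan : dualRMCode F 2 ⊓
        ⨅ p ∈ ((↑S : Set (Projectivization F (Fin 3 → F)))ᶜ),
          LinearMap.ker (LinearMap.proj (R := F) (φ := fun _ => F) p)
        = Submodule.span F {w₀} := by
      apply le_antisymm
      · intro w hw
        obtain ⟨hsupp, hK⟩ := (memW w).mp hw
        rw [Submodule.mem_span_singleton]
        refine ⟨w (pt 0) * (v₀ 0)⁻¹, ?_⟩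
        have hdiff : (fun i => w (pt i) - (w (pt 0) * (v₀ 0)⁻¹) * v₀ i) = 0 := by
          refine hstar _ (fun c => ?_) 0 ?_
          ·
            have h1 := hK c
            have h2 := hv₀K c
            calc ∑ i, Qf c (q i) * (w (pt i) - (w (pt 0) * (v₀ 0)⁻¹) * v₀ i)
                = (∑ i, Qf c (q i) * w (pt i))
                  - (w (pt 0) * (v₀ 0)⁻¹) * ∑ i, Qf c (q i) * v₀ i := by
                  rw [Finset.mul_sum, ← Finset.sum_sub_distrib]
                  exact Finset.sum_congr rfl fun i _ => by ring
              _ = 0 := by rw [h1, h2]; ring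
          · show w (pt 0) - (w (pt 0) * (v₀ 0)⁻¹) * v₀ 0 = 0
            rw [mul_assoc, inv_mul_cancel₀ (hv₀all 0), mul_one, sub_self]
        funext p
        by_cases hp : p ∈ S
        · obtain ⟨i, rfl⟩ := hptsurj p hp
          have h3 := congrFun hdiff i
          simp only [Pi.zero_apply] at h3
          rw [Pi.smul_apply, smul_eq_mul, hw₀pt i]
          exact (sub_eq_zero.mp h3).symm
        · rw [Pi.smul_apply, smul_eq_mul, hw₀supp p hp, hsupp p hp, mul_zero]
      · rw [Submodule.span_le, Set.singleton_subset_iff]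
        exact hw₀W
    rw [hWspan]
    exact finrank_span_singleton hw₀ne
  · -- weight 6
    intro cw hcw hcwne
    obtain ⟨hsupp, hK⟩ := (memW cw).mp hcw
    have hall : ∀ i, cw (pt i) ≠ 0 := by
      intro i hi
      apply hcwne
      have h0 : (fun i => cw (pt i)) = 0 := hstar _ hK i hi
      funext p
      by_cases hp : p ∈ S
      · obtain ⟨j, rfl⟩ := hptsurj p hp
        exact congrFun h0 j
      · exact hsupp p hp
    have hsets : {p | cw p ≠ 0} = (↑S : Set (Projectivization F (Fin 3 → F))) := by
      ext p
      simp only [Set.mem_setOf_eq, Finset.mem_coe]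
      constructor
      · intro h
        by_contra hp
        exact h (hsupp p hp)
      · intro hp
        obtain ⟨i, rfl⟩ := hptsurj p hp
        exact hall i
    rw [hsets, Nat.card_coe_set_eq, Set.ncard_coe_finset, hS6]
end

section
/- Write W^{[2]}_{C_{2,2}^⊥}(X,Y) = Σ_i B^{[2]}_i X^{q²+q+1-i} Y^i for the second weight enumerator of the dual conic code. Then B^{[2]}_0 = 1, B^{[2]}_1 = B^{[2]}_2 = B^{[2]}_3 = 0, and B^{[2]}_4 = (q²-1)(q²+q+1)·C(q+1,4). -/
open MvPolynomial

attribute [local instance] Classical.propDecidable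
set_option linter.unusedSectionVars false
set_option maxHeartbeats 1000000

namespace DCC

open Module Projectivization Function

variable {F : Type*} [Field F] [Fintype F] [Fintype (Projectivization F (Fin 3 → F))]

local notation "Pt" => Projectivization F (Fin 3 → F)

lemma coordPairing_apply {ι : Type*} [Fintype ι] (a c : ι → F) :
    coordPairing a c = ∑ i, a i * c i := by
  simp [coordPairing]

lemma mem_dual_iff {d : ℕ} {c : Pt → F} :
    c ∈ dualRMCode F d ↔
      ∀ f : MvPolynomial (Fin 3) F, f.IsHomogeneous d →
        ∑ p : Pt, eval p.rep f * c p = 0 := by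
  simp [dualRMCode, Submodule.mem_iInf, LinearMap.mem_ker, coordPairing_apply]

noncomputable def toPoly (φ : Module.Dual F (Fin 3 → F)) : MvPolynomial (Fin 3) F :=
  ∑ i, C (φ fun j => if i = j then 1 else 0) * X i

lemma toPoly_isHomogeneous (φ : Module.Dual F (Fin 3 → F)) :
    (toPoly φ).IsHomogeneous 1 :=
  IsHomogeneous.sum _ _ _ fun i _ => by
    simpa using (isHomogeneous_C _ _).mul (isHomogeneous_X F i)

lemma eval_toPoly (φ : Module.Dual F (Fin 3 → F)) (v : Fin 3 → F) :
    eval v (toPoly φ) = φ v := by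
  conv_rhs => rw [pi_eq_sum_univ v]
  rw [toPoly, map_sum, map_sum]
  refine Finset.sum_congr rfl fun i _ => ?_
  rw [map_smul]
  simp [mul_comm]

lemma exists_sep {U : Submodule F (Fin 3 → F)} {v : Fin 3 → F} (hv : v ∉ U) :
    ∃ φ : Module.Dual F (Fin 3 → F), (∀ u ∈ U, φ u = 0) ∧ φ v ≠ 0 := by
  obtain ⟨f, hf0, hfb⟩ := U.exists_dual_map_eq_bot_of_notMem hv inferInstance
  refine ⟨f, fun u hu => ?_, hf0⟩
  have : f u ∈ U.map f := Submodule.mem_map_of_mem hu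
  rwa [hfb, Submodule.mem_bot] at this

lemma rep_notMem_span {p s : Pt} (h : p ≠ s) :
    p.rep ∉ Submodule.span F {s.rep} := by
  intro hmem
  obtain ⟨a, ha⟩ := Submodule.mem_span_singleton.mp hmem
  have ha0 : a ≠ 0 := by
    rintro rfl
    exact p.rep_nonzero (by simpa using ha.symm)
  refine h ?_
  rw [← Projectivization.mk_rep p, ← Projectivization.mk_rep s,
    Projectivization.mk_eq_mk_iff]
  exact ⟨Units.mk0 a ha0, by simpa [Units.smul_def] using ha⟩

lemma coord_zero {c : Pt → F} (hc : c ∈ dualRMCode F 2) {f : MvPolynomial (Fin 3) F}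
    (hf : f.IsHomogeneous 2) {p : Pt}
    (h0 : ∀ r, c r ≠ 0 → r ≠ p → eval r.rep f = 0) (hp : eval p.rep f ≠ 0) :
    c p = 0 := by
  have hsum := (mem_dual_iff.mp hc) f hf
  rw [Finset.sum_eq_single p (fun r _ hr => ?_) (by simp)] at hsum
  · exact (mul_eq_zero.mp hsum).resolve_left hp
  · by_cases hcr : c r = 0
    · simp [hcr]
    · simp [h0 r hcr hr]

lemma coord_eq_zero {c : Pt → F} (hc : c ∈ dualRMCode F 2) {p s t : Pt}
    (hs : s ≠ p) (ht : t ≠ p) (hcov : ∀ r, c r ≠ 0 → r = p ∨ r = s ∨ r = t) :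
    c p = 0 := by
  obtain ⟨φ, hφ0, hφp⟩ := exists_sep (rep_notMem_span (Ne.symm hs))
  obtain ⟨ψ, hψ0, hψp⟩ := exists_sep (rep_notMem_span (Ne.symm ht))
  have hφs : φ s.rep = 0 := hφ0 _ (Submodule.mem_span_singleton_self _)
  have hψt : ψ t.rep = 0 := hψ0 _ (Submodule.mem_span_singleton_self _)
  refine coord_zero hc ((toPoly_isHomogeneous φ).mul (toPoly_isHomogeneous ψ))
    (fun r hr hrp => ?_) ?_
  · rcases hcov r hr with h | rfl | rfl
    · exact absurd h hrp
    · rw [map_mul, eval_toPoly, hφs, zero_mul]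
    · rw [map_mul, eval_toPoly, eval_toPoly, hψt, mul_zero]
  · rw [map_mul, eval_toPoly, eval_toPoly]
    exact mul_ne_zero hφp hψp

lemma exists_ne_pt (p : Pt) : ∃ z : Pt, z ≠ p := by
  have h0 : (Pi.single 0 1 : Fin 3 → F) ≠ 0 := by
    intro h
    have := congrFun h 0
    simp [Pi.single_apply] at this
  have h1 : (Pi.single 1 1 : Fin 3 → F) ≠ 0 := by
    intro h
    have := congrFun h 1
    simp [Pi.single_apply] at this
  have hne : Projectivization.mk F _ h0 ≠ Projectivization.mk F _ h1 := by
    intro hh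
    rw [Projectivization.mk_eq_mk_iff] at hh
    obtain ⟨a, ha⟩ := hh
    have := congrFun ha 0
    simp [Units.smul_def, Pi.single_apply] at this
  rcases eq_or_ne (Projectivization.mk F _ h0) p with h | h
  · exact ⟨Projectivization.mk F _ h1, fun hh => hne (h.trans hh.symm)⟩
  · exact ⟨_, h⟩

lemma zero_of_cover {c : Pt → F} (hc : c ∈ dualRMCode F 2) (a b e : Pt)
    (hcov : ∀ r, c r ≠ 0 → r = a ∨ r = b ∨ r = e) : c = 0 := by
  funext p
  by_contra hp
  obtain ⟨z, hzp⟩ := exists_ne_pt (F := F) p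
  have key : ∀ s t : Pt, (∀ r, c r ≠ 0 → r = p ∨ r = s ∨ r = t) → c p = 0 := by
    intro s t hcov'
    by_cases hs : s = p
    · by_cases ht : t = p
      · exact coord_eq_zero hc hzp hzp fun r hr => by
          rcases hcov' r hr with h | h | h
          exacts [Or.inl h, Or.inl (h.trans hs), Or.inl (h.trans ht)]
      · exact coord_eq_zero hc ht ht fun r hr => by
          rcases hcov' r hr with h | h | h
          exacts [Or.inl h, Or.inl (h.trans hs), Or.inr (Or.inl h)]
    · by_cases ht : t = p
      · exact coord_eq_zero hc hs hs fun r hr => by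
          rcases hcov' r hr with h | h | h
          exacts [Or.inl h, Or.inr (Or.inl h), Or.inl (h.trans ht)]
      · exact coord_eq_zero hc hs ht hcov'
  rcases hcov p hp with h | h | h
  · refine hp (key (if b = p then z else b) (if e = p then z else e) ?_)
    intro r hr
    rcases hcov r hr with h1 | h1 | h1
    · exact Or.inl (h1.trans h.symm)
    · by_cases hb : b = p
      · exact Or.inl (h1.trans hb)
      · rw [if_neg hb]; exact Or.inr (Or.inl h1)
    · by_cases he : e = p
      · exact Or.inl (h1.trans he)
      · rw [if_neg he]; exact Or.inr (Or.inr h1)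
  · refine hp (key (if a = p then z else a) (if e = p then z else e) ?_)
    intro r hr
    rcases hcov r hr with h1 | h1 | h1
    · by_cases hb : a = p
      · exact Or.inl (h1.trans hb)
      · rw [if_neg hb]; exact Or.inr (Or.inl h1)
    · exact Or.inl (h1.trans h.symm)
    · by_cases he : e = p
      · exact Or.inl (h1.trans he)
      · rw [if_neg he]; exact Or.inr (Or.inr h1)
  · refine hp (key (if a = p then z else a) (if b = p then z else b) ?_)
    intro r hr
    rcases hcov r hr with h1 | h1 | h1
    · by_cases hb : a = p
      · exact Or.inl (h1.trans hb)
      · rw [if_neg hb]; exact Or.inr (Or.inl h1)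
    · by_cases he : b = p
      · exact Or.inl (h1.trans he)
      · rw [if_neg he]; exact Or.inr (Or.inr h1)
    · exact Or.inl (h1.trans h.symm)

lemma eval_homog₂ {f : MvPolynomial (Fin 3) F} (hf : f.IsHomogeneous 2) (u w : Fin 3 → F) :
    ∃ A B C2 : F, ∀ a b : F,
      eval (a • u + b • w) f = A * (a * a) + B * (a * b) + C2 * (b * b) := by
  set s : Fin 3 → MvPolynomial (Fin 2) F :=
    fun i => C (u i) * X 0 + C (w i) * X 1 with hs
  set g : MvPolynomial (Fin 2) F := eval₂ C s f with hgdef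
  have hg : g.IsHomogeneous 2 := by
    have := hf.eval₂ (C : F →+* MvPolynomial (Fin 2) F) s
      (fun r => isHomogeneous_C _ _)
      (fun i => by
        simpa using ((isHomogeneous_C _ (u i)).mul (isHomogeneous_X F 0)).add
          ((isHomogeneous_C _ (w i)).mul (isHomogeneous_X F 1)))
    simpa using this
  set d20 : Fin 2 →₀ ℕ := Finsupp.single 0 2 with hd20
  set d11 : Fin 2 →₀ ℕ := Finsupp.single 0 1 + Finsupp.single 1 1 with hd11
  set d02 : Fin 2 →₀ ℕ := Finsupp.single 1 2 with hd02
  have hsupp : g.support ⊆ {d20, d11, d02} := by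
    intro d hd
    have hw := hg (mem_support_iff.mp hd)
    have hdeg : d 0 + d 1 = 2 := by
      change (Finsupp.weight (fun _ => 1)) d = 2 at hw
      rw [← Finsupp.degree_eq_weight_one] at hw
      have h2 : d.degree = ∑ i : Fin 2, d i := by
        rw [Finsupp.degree]
        exact Finset.sum_subset (Finset.subset_univ _)
          (fun x _ hx => Finsupp.notMem_support_iff.mp hx)
      rw [h2, Fin.sum_univ_two] at hw
      exact hw
    have hcases : (d 0 = 2 ∧ d 1 = 0) ∨ (d 0 = 1 ∧ d 1 = 1) ∨ (d 0 = 0 ∧ d 1 = 2) := by omega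
    simp only [Finset.mem_insert, Finset.mem_singleton]
    rcases hcases with ⟨h0, h1⟩ | ⟨h0, h1⟩ | ⟨h0, h1⟩
    · left; ext i; fin_cases i <;> simp [hd20, h0, h1, Finsupp.single_apply]
    · right; left; ext i; fin_cases i <;> simp [hd11, h0, h1, Finsupp.single_apply]
    · right; right; ext i; fin_cases i <;> simp [hd02, h0, h1, Finsupp.single_apply]
  have hd1 : d20 ≠ d11 := by
    intro h
    have := DFunLike.congr_fun h 0
    simp [hd20, hd11, Finsupp.single_apply] at this
  have hd2 : d20 ≠ d02 := by
    intro h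
    have := DFunLike.congr_fun h 0
    simp [hd20, hd02, Finsupp.single_apply] at this
  have hd3 : d11 ≠ d02 := by
    intro h
    have := DFunLike.congr_fun h 0
    simp [hd11, hd02, Finsupp.single_apply] at this
  refine ⟨coeff d20 g, coeff d11 g, coeff d02 g, fun a b => ?_⟩
  have hcomp : eval (a • u + b • w) f = eval ![a, b] g := by
    rw [hgdef, MvPolynomial.eval_eval₂]
    have h1 : ((MvPolynomial.eval ![a, b]).comp (C : F →+* MvPolynomial (Fin 2) F)) = RingHom.id F := by
      ext r; simp
    rw [h1]
    have h2 : (fun i => MvPolynomial.eval ![a, b] (s i)) = fun i => a * u i + b * w i := by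
      funext i; simp [hs]; ring
    rw [h2, eval₂_id]
    congr 1
  rw [hcomp, MvPolynomial.eval_eq' ![a, b] g]
  rw [Finset.sum_subset hsupp (fun d _ hd => by
    rw [notMem_support_iff.mp hd, zero_mul])]
  rw [Finset.sum_insert (by simp [hd1, hd2]), Finset.sum_insert (by simp [hd3]),
    Finset.sum_singleton]
  have e20 : ∏ i : Fin 2, (![a, b] i) ^ (d20 i) = a * a := by
    rw [Fin.prod_univ_two]
    simp [hd20, Finsupp.single_apply, sq]
  have e11 : ∏ i : Fin 2, (![a, b] i) ^ (d11 i) = a * b := by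
    rw [Fin.prod_univ_two]
    simp [hd11, Finsupp.single_apply]
  have e02 : ∏ i : Fin 2, (![a, b] i) ^ (d02 i) = b * b := by
    rw [Fin.prod_univ_two]
    simp [hd02, Finsupp.single_apply, sq]
  rw [e20, e11, e02]; ring

lemma finrank_span_pair_reps {p s : Pt} (h : p ≠ s) :
    finrank F (Submodule.span F ({p.rep, s.rep} : Set (Fin 3 → F))) = 2 := by
  have hli : LinearIndependent F ![p.rep, s.rep] := by
    rw [LinearIndependent.pair_iff' p.rep_nonzero]
    intro t ht
    have ht0 : t ≠ 0 := by
      rintro rfl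
      exact s.rep_nonzero (by simpa using ht.symm)
    refine h ?_
    rw [← Projectivization.mk_rep p, ← Projectivization.mk_rep s,
      Projectivization.mk_eq_mk_iff]
    exact ⟨(Units.mk0 t ht0)⁻¹, by
      simp [Units.smul_def, ← ht, smul_smul, inv_mul_cancel₀ ht0]⟩
  have hr : Set.range ![p.rep, s.rep] = {p.rep, s.rep} := by
    ext z
    constructor
    · rintro ⟨i, rfl⟩
      fin_cases i <;> simp
    · rintro (rfl | rfl)
      exacts [⟨0, rfl⟩, ⟨1, rfl⟩]
  rw [← hr, finrank_span_eq_card hli, Fintype.card_fin]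

lemma collinear_of_supp {c : Pt → F} (hc : c ∈ dualRMCode F 2) (pt : Fin 4 → Pt)
    (hinj : Injective pt) (hne : ∀ j, c (pt j) ≠ 0)
    (hcov : ∀ r, c r ≠ 0 → ∃ j, r = pt j) :
    ∀ j, (pt j).rep ∈ Submodule.span F {(pt 0).rep, (pt 1).rep} := by
  have aux : ∀ j k l : Fin 4, j ≠ 0 → j ≠ 1 → k ≠ 0 → k ≠ 1 → k ≠ j → l ≠ j →
      (l = 0 ∨ l = 1 ∨ l = k) := by decide
  have main : ∀ j k : Fin 4, j ≠ 0 → j ≠ 1 → k ≠ 0 → k ≠ 1 → k ≠ j →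
      (pt j).rep ∈ Submodule.span F {(pt 0).rep, (pt 1).rep} := by
    intro j k hj0 hj1 hk0 hk1 hkj
    by_contra hmem
    obtain ⟨φ, hφ0, hφp⟩ := exists_sep hmem
    obtain ⟨ψ, hψ0, hψp⟩ := exists_sep (rep_notMem_span (hinj.ne (Ne.symm hkj)))
    refine hne j (coord_zero hc ((toPoly_isHomogeneous φ).mul (toPoly_isHomogeneous ψ))
      (fun r hr hrj => ?_) ?_)
    · obtain ⟨l, rfl⟩ := hcov r hr
      have hlj : l ≠ j := fun h => hrj (by rw [h])
      rw [map_mul, eval_toPoly, eval_toPoly]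
      rcases aux j k l hj0 hj1 hk0 hk1 hkj hlj with rfl | rfl | rfl
      · rw [hφ0 _ (Submodule.subset_span (Set.mem_insert _ _)), zero_mul]
      · rw [hφ0 _ (Submodule.subset_span (Set.mem_insert_of_mem _ rfl)), zero_mul]
      · rw [hψ0 _ (Submodule.mem_span_singleton_self _), mul_zero]
    · rw [map_mul, eval_toPoly, eval_toPoly]
      exact mul_ne_zero hφp hψp
  intro j
  by_cases hj0 : j = 0
  · subst hj0; exact Submodule.subset_span (Set.mem_insert _ _)
  by_cases hj1 : j = 1
  · subst hj1; exact Submodule.subset_span (Set.mem_insert_of_mem _ rfl)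
  by_cases hj2 : j = 2
  · exact main j 3 hj0 hj1 (by decide) (by decide) (by rw [hj2]; decide)
  · have hj3 : j = 3 := by omega
    exact main j 2 hj0 hj1 (by decide) (by decide) (by rw [hj3]; decide)

lemma exists_codeword (pt : Fin 4 → Pt) (hinj : Injective pt)
    (W : Submodule F (Fin 3 → F)) (hW : finrank F W = 2)
    (hmem : ∀ j, (pt j).rep ∈ W) :
    ∃ c : Pt → F, c ∈ dualRMCode F 2 ∧ c ≠ 0 ∧ ∀ r, c r ≠ 0 → ∃ j, r = pt j := by
  set u := (pt 0).rep with hu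
  set w := (pt 1).rep with hw
  have hsp : Submodule.span F ({u, w} : Set (Fin 3 → F)) = W := by
    refine Submodule.eq_of_le_of_finrank_le ?_ ?_
    · rw [Submodule.span_le]
      rintro z (rfl | rfl)
      exacts [hmem 0, hmem 1]
    · rw [hW, finrank_span_pair_reps (hinj.ne (by decide))]
  have hco : ∀ j, ∃ α β : F, α • u + β • w = (pt j).rep := fun j =>
    Submodule.mem_span_pair.mp (hsp ▸ hmem j)
  choose a b hab using hco
  set v : Fin 3 → Fin 4 → F :=
    ![fun j => a j * a j, fun j => a j * b j, fun j => b j * b j] with hv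
  set L : (Fin 4 → F) →ₗ[F] (Fin 3 → F) := LinearMap.pi (fun i => coordPairing (v i)) with hL
  have hker : LinearMap.ker L ≠ ⊥ := by
    intro hbot
    have hinj' : Injective L := LinearMap.ker_eq_bot.mp hbot
    have := LinearMap.finrank_le_finrank_of_injective hinj'
    rw [Module.finrank_fintype_fun_eq_card, Module.finrank_fintype_fun_eq_card] at this
    simp at this
  obtain ⟨x, hxker, hx0⟩ := (Submodule.ne_bot_iff _).mp hker
  have hxi : ∀ i : Fin 3, ∑ j, v i j * x j = 0 := by
    intro i
    have := congrFun (congrArg (fun z => z) (LinearMap.mem_ker.mp hxker)) i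
    have h2 : L x i = 0 := by rw [LinearMap.mem_ker.mp hxker]; rfl
    rwa [hL, LinearMap.pi_apply, coordPairing_apply] at h2
  refine ⟨fun p => ∑ j, if p = pt j then x j else 0, ?_, ?_, ?_⟩
  · rw [mem_dual_iff]
    intro f hf
    obtain ⟨A, B, C2, hABC⟩ := eval_homog₂ hf u w
    have step1 : ∑ p : Pt, eval p.rep f * (∑ j, if p = pt j then x j else 0)
        = ∑ j, eval (pt j).rep f * x j := by
      have hsw : ∀ p : Pt, eval p.rep f * (∑ j, if p = pt j then x j else 0)
          = ∑ j, if p = pt j then eval p.rep f * x j else 0 := by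
        intro p
        rw [Finset.mul_sum]
        exact Finset.sum_congr rfl fun j _ => by split <;> simp
      rw [Finset.sum_congr rfl fun p _ => hsw p, Finset.sum_comm]
      refine Finset.sum_congr rfl fun j _ => ?_
      rw [Finset.sum_ite_eq' Finset.univ (pt j) (fun p => eval p.rep f * x j)]
      simp
    rw [step1]
    have step2 : ∀ j, eval (pt j).rep f * x j
        = A * ((a j * a j) * x j) + B * ((a j * b j) * x j) + C2 * ((b j * b j) * x j) := by
      intro j
      rw [← hab j, hABC (a j) (b j)]; ring
    rw [Finset.sum_congr rfl fun j _ => step2 j]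
    rw [Finset.sum_add_distrib, Finset.sum_add_distrib,
      ← Finset.mul_sum, ← Finset.mul_sum, ← Finset.mul_sum]
    have e0 : ∑ j, (a j * a j) * x j = 0 := by simpa [hv] using hxi 0
    have e1 : ∑ j, (a j * b j) * x j = 0 := by simpa [hv] using hxi 1
    have e2 : ∑ j, (b j * b j) * x j = 0 := by simpa [hv] using hxi 2
    rw [e0, e1, e2]
    simp
  · intro h0
    obtain ⟨j, hj⟩ := Function.ne_iff.mp hx0
    have := congrFun h0 (pt j)
    simp only [Pi.zero_apply] at this
    rw [Finset.sum_eq_single j (fun j' _ hj' => if_neg (fun h => hj' (hinj h).symm))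
      (by simp)] at this
    exact hj (by simpa using this)
  · intro r hr
    by_contra hnone
    push_neg at hnone
    exact hr (Finset.sum_eq_zero fun j _ => if_neg (hnone j))

lemma smul_of_mem {T : Finset Pt} (hT : T.card = 4) {x y : Pt → F}
    (hx : x ∈ dualRMCode F 2) (hy : y ∈ dualRMCode F 2)
    (hxT : ∀ r, x r ≠ 0 → r ∈ T) (hyT : ∀ r, y r ≠ 0 → r ∈ T) (hx0 : x ≠ 0) :
    ∃ t : F, y = t • x := by
  obtain ⟨p0, hp0⟩ : ∃ p0, x p0 ≠ 0 := Function.ne_iff.mp hx0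
  refine ⟨y p0 / x p0, ?_⟩
  set z : Pt → F := y - (y p0 / x p0) • x with hzdef
  have hz : z ∈ dualRMCode F 2 :=
    Submodule.sub_mem _ hy (Submodule.smul_mem _ _ hx)
  have hz0 : z p0 = 0 := by
    simp only [hzdef, Pi.sub_apply, Pi.smul_apply, smul_eq_mul]
    field_simp
    simp
  have hcov : ∀ r, z r ≠ 0 → r ∈ T.erase p0 := by
    intro r hr
    rw [Finset.mem_erase]
    constructor
    · rintro rfl; exact hr hz0
    · by_cases hxr : x r = 0
      · refine hyT r fun hyr => hr ?_
        simp [hzdef, hxr, hyr]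
      · exact hxT r hxr
  have hc3 : (T.erase p0).card = 3 := by
    rw [Finset.card_erase_of_mem (hxT p0 hp0), hT]
  obtain ⟨α, β, γ, _, _, _, hTe⟩ := Finset.card_eq_three.mp hc3
  have hzz : z = 0 := by
    refine zero_of_cover hz α β γ fun r hr => ?_
    have := hcov r hr
    rw [hTe] at this
    simpa using this
  have : y - (y p0 / x p0) • x = 0 := hzz
  rw [sub_eq_zero] at this
  exact this

lemma card_rep_mem (W : Submodule F (Fin 3 → F)) :
    Nat.card {p : Pt // p.rep ∈ W} * (Fintype.card F - 1)
      = Fintype.card F ^ (finrank F W) - 1 := by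
  have e : {p : Pt // p.rep ∈ W} × Fˣ ≃ {v : Fin 3 → F // v ∈ W ∧ v ≠ 0} := by
    refine Equiv.ofBijective
      (fun pa => ⟨(pa.2 : F) • pa.1.1.rep,
        W.smul_mem _ pa.1.2, smul_ne_zero pa.2.ne_zero pa.1.1.rep_nonzero⟩) ⟨?_, ?_⟩
    · rintro ⟨⟨p, hp⟩, t⟩ ⟨⟨p', hp'⟩, t'⟩ h
      have hh : (t : F) • p.rep = (t' : F) • p'.rep := congrArg Subtype.val h
      have hpp : p = p' := by
        rw [← Projectivization.mk_rep p, ← Projectivization.mk_rep p',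
          Projectivization.mk_eq_mk_iff]
        refine ⟨t⁻¹ * t', ?_⟩
        rw [Units.smul_def, Units.val_mul, mul_smul, ← hh, smul_smul]
        simp
      subst hpp
      have ht : (t : F) = (t' : F) := by
        have h2 : ((t : F) - (t' : F)) • p.rep = 0 := by
          rw [sub_smul, hh, sub_self]
        rcases smul_eq_zero.mp h2 with h3 | h3
        · exact sub_eq_zero.mp h3
        · exact absurd h3 p.rep_nonzero
      simp [Prod.ext_iff, Units.ext_iff, ht]
    · rintro ⟨v, hvW, hv0⟩
      have hmk := Projectivization.mk_rep (Projectivization.mk F v hv0)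
      rw [Projectivization.mk_eq_mk_iff] at hmk
      obtain ⟨uu, huu⟩ := hmk
      have hrep : (Projectivization.mk F v hv0).rep = (uu : F) • v := by
        rw [← huu, Units.smul_def]
      refine ⟨⟨⟨Projectivization.mk F v hv0, ?_⟩, uu⁻¹⟩, ?_⟩
      · rw [hrep]; exact W.smul_mem _ hvW
      · ext : 1
        simp only [hrep]
        rw [smul_smul]
        push_cast
        simp
  have h1 : Nat.card ({p : Pt // p.rep ∈ W} × Fˣ)
      = Nat.card {v : Fin 3 → F // v ∈ W ∧ v ≠ 0} := Nat.card_congr e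
  rw [Nat.card_prod] at h1
  have hu : Nat.card Fˣ = Fintype.card F - 1 := by
    rw [Nat.card_eq_fintype_card, Fintype.card_units]
  rw [hu] at h1
  rw [h1]
  have e2 : {v : Fin 3 → F // v ∈ W ∧ v ≠ 0} ≃ {w : W // w ≠ 0} :=
    { toFun := fun v => ⟨⟨v.1, v.2.1⟩, fun h => v.2.2 (by simpa using congrArg Subtype.val h)⟩
      invFun := fun w => ⟨w.1.1, w.1.2, fun h => w.2 (Subtype.ext h)⟩
      left_inv := fun v => rfl
      right_inv := fun w => rfl }
  rw [Nat.card_congr e2]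
  rw [Nat.card_eq_fintype_card]
  have hcompl : Fintype.card {w : W // w ≠ 0} = Fintype.card W - 1 := by
    have h := Fintype.card_subtype_compl (α := W) (p := fun w => w = 0)
    have h2 : Fintype.card {x : W // x = 0} = 1 := Fintype.card_subtype_eq (0 : W)
    rw [h2] at h
    calc Fintype.card {w : W // w ≠ 0} = Fintype.card {x : W // ¬x = 0} := by
          apply Fintype.card_congr
          exact Equiv.subtypeEquivRight fun _ => Iff.rfl
      _ = Fintype.card W - 1 := h
  rw [hcompl, ← card_eq_pow_finrank (K := F) (V := W)]

lemma two_le_q : 2 ≤ Fintype.card F := Fintype.one_lt_card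

lemma cube_fact (q : ℕ) (hq : 1 ≤ q) : (q ^ 2 + q + 1) * (q - 1) = q ^ 3 - 1 := by
  obtain ⟨k, rfl⟩ : ∃ k, q = k + 1 := ⟨q - 1, by omega⟩
  rw [Nat.add_sub_cancel]
  exact Nat.eq_sub_of_add_eq (by ring)

lemma sq_fact (q : ℕ) (hq : 1 ≤ q) : (q + 1) * (q - 1) = q ^ 2 - 1 := by
  obtain ⟨k, rfl⟩ : ∃ k, q = k + 1 := ⟨q - 1, by omega⟩
  rw [Nat.add_sub_cancel]
  exact Nat.eq_sub_of_add_eq (by ring)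

lemma card_P : Nat.card Pt = Fintype.card F ^ 2 + Fintype.card F + 1 := by
  have h := card_rep_mem (F := F) ⊤
  have he : Nat.card {p : Pt // p.rep ∈ (⊤ : Submodule F (Fin 3 → F))} = Nat.card Pt :=
    Nat.card_congr (Equiv.subtypeUnivEquiv fun _ => Submodule.mem_top)
  rw [he, finrank_top, Module.finrank_fintype_fun_eq_card, Fintype.card_fin] at h
  have hfact := cube_fact (Fintype.card F) (by have := two_le_q (F := F); omega)
  have hq1 : 0 < Fintype.card F - 1 := by have := two_le_q (F := F); omega
  exact Nat.eq_of_mul_eq_mul_right hq1 (h.trans hfact.symm)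

lemma card_line {W : Submodule F (Fin 3 → F)} (hW : finrank F W = 2) :
    Nat.card {p : Pt // p.rep ∈ W} = Fintype.card F + 1 := by
  have h := card_rep_mem (F := F) W
  rw [hW] at h
  have hfact := sq_fact (Fintype.card F) (by have := two_le_q (F := F); omega)
  have hq1 : 0 < Fintype.card F - 1 := by have := two_le_q (F := F); omega
  exact Nat.eq_of_mul_eq_mul_right hq1 (h.trans hfact.symm)

lemma coordPairing_basis (a : Fin 3 → F) (i : Fin 3) :
    coordPairing a (fun j => if i = j then (1 : F) else 0) = a i := by
  rw [coordPairing_apply]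
  rw [Finset.sum_eq_single i (fun j _ hj => by simp [Ne.symm hj]) (by simp)]
  simp

lemma eq_coordPairing (φ : Module.Dual F (Fin 3 → F)) :
    φ = coordPairing (fun i => φ fun j => if i = j then 1 else 0) := by
  apply LinearMap.ext
  intro v
  conv_lhs => rw [pi_eq_sum_univ v]
  rw [map_sum, coordPairing_apply]
  exact Finset.sum_congr rfl fun i _ => by rw [map_smul]; simp [mul_comm]

lemma finrank_ker_coordPairing {a : Fin 3 → F} (ha : a ≠ 0) :
    finrank F (LinearMap.ker (coordPairing a)) = 2 := by
  have hne : coordPairing a ≠ 0 := by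
    obtain ⟨i, hi⟩ := Function.ne_iff.mp ha
    intro h
    apply hi
    have := congrArg (fun ψ => ψ (fun j => if i = j then (1 : F) else 0)) h
    simpa [coordPairing_basis] using this
  have hrange : LinearMap.range (coordPairing a) = ⊤ := by
    rcases eq_bot_or_eq_top (LinearMap.range (coordPairing a)) with h | h
    · exact absurd (LinearMap.range_eq_bot.mp h) hne
    · exact h
  have := LinearMap.finrank_range_add_finrank_ker (coordPairing a)
  rw [hrange, finrank_top, Module.finrank_self, Module.finrank_fintype_fun_eq_card,
    Fintype.card_fin] at this
  omega

lemma card_lines :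
    Nat.card {W : Submodule F (Fin 3 → F) // finrank F W = 2} = Nat.card Pt := by
  have : ∀ p : Pt, finrank F (LinearMap.ker (coordPairing p.rep)) = 2 :=
    fun p => finrank_ker_coordPairing p.rep_nonzero
  refine (Nat.card_eq_of_bijective
    (fun p : Pt => (⟨LinearMap.ker (coordPairing p.rep), this p⟩ :
      {W : Submodule F (Fin 3 → F) // finrank F W = 2})) ⟨?_, ?_⟩).symm
  · intro p p' h
    have hker : LinearMap.ker (coordPairing p.rep) = LinearMap.ker (coordPairing p'.rep) :=
      congrArg Subtype.val h
    set φ := coordPairing (F := F) p.rep with hφ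
    set ψ := coordPairing (F := F) p'.rep with hψ
    obtain ⟨i, hi⟩ := Function.ne_iff.mp p.rep_nonzero
    set e : Fin 3 → F := fun j => if i = j then 1 else 0 with he
    have hφe : φ e = p.rep i := coordPairing_basis _ _
    have hφv : φ e ≠ 0 := by rw [hφe]; simpa using hi
    have hψv : ψ e ≠ 0 := by
      intro h0
      exact hφv (by
        have : e ∈ LinearMap.ker ψ := LinearMap.mem_ker.mpr h0
        rw [← hker] at this
        exact LinearMap.mem_ker.mp this)
    have hprop : ∀ v : Fin 3 → F, (φ e) * ψ v = (ψ e) * φ v := by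
      intro v
      have hx : (φ e) • v - (φ v) • e ∈ LinearMap.ker φ := by
        rw [LinearMap.mem_ker, map_sub, map_smul, map_smul, smul_eq_mul, smul_eq_mul,
          mul_comm]
        ring
      rw [hker, LinearMap.mem_ker, map_sub, map_smul, map_smul, smul_eq_mul,
        smul_eq_mul, sub_eq_zero] at hx
      rw [mul_comm (ψ e) (φ v)]
      exact hx
    set t : F := ψ e / φ e with ht
    have hrep : p'.rep = t • p.rep := by
      funext j
      have h1 : ψ (fun k => if j = k then 1 else 0) = p'.rep j := coordPairing_basis _ _
      have h2 : φ (fun k => if j = k then 1 else 0) = p.rep j := coordPairing_basis _ _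
      have h3 : (φ e) * p'.rep j = (ψ e) * p.rep j := by
        rw [← h1, ← h2]; exact hprop _
      show p'.rep j = t * p.rep j
      rw [ht, div_mul_eq_mul_div, eq_div_iff hφv]
      linear_combination h3
    have ht0 : t ≠ 0 := by
      intro h0
      apply p'.rep_nonzero
      rw [hrep, h0, zero_smul]
    rw [← Projectivization.mk_rep p, ← Projectivization.mk_rep p',
      Projectivization.mk_eq_mk_iff]
    exact ⟨(Units.mk0 t ht0)⁻¹, by
      simp only [Units.smul_def, Units.val_inv_eq_inv_val, Units.val_mk0, hrep,
        smul_smul, inv_mul_cancel₀ ht0, one_smul]⟩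
  · rintro ⟨W, hW⟩
    have hWne : W ≠ ⊤ := by
      intro h
      rw [h, finrank_top, Module.finrank_fintype_fun_eq_card, Fintype.card_fin] at hW
      omega
    obtain ⟨v, hv⟩ : ∃ v, v ∉ W := by
      by_contra h
      push_neg at h
      exact hWne (Submodule.eq_top_iff'.mpr h)
    obtain ⟨φ, hφ0, hφv⟩ := exists_sep hv
    set a : Fin 3 → F := fun i => φ fun j => if i = j then 1 else 0 with ha
    have hφa : φ = coordPairing a := eq_coordPairing φ
    have ha0 : a ≠ 0 := by
      intro h0
      apply hφv
      rw [hφa, h0]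
      simp [coordPairing_apply]
    have hkerW : LinearMap.ker (coordPairing a) = W := by
      symm
      refine Submodule.eq_of_le_of_finrank_le ?_ ?_
      · intro u hu
        rw [LinearMap.mem_ker, ← hφa]
        exact hφ0 u hu
      · rw [hW, finrank_ker_coordPairing ha0]
    refine ⟨Projectivization.mk F a ha0, ?_⟩
    ext : 1
    show LinearMap.ker (coordPairing (Projectivization.mk F a ha0).rep) = W
    have hmk := Projectivization.mk_rep (Projectivization.mk F a ha0)
    rw [Projectivization.mk_eq_mk_iff] at hmk
    obtain ⟨uu, huu⟩ := hmk
    have hrep : (Projectivization.mk F a ha0).rep = (uu : F) • a := by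
      rw [← huu, Units.smul_def]
    rw [hrep, ← hkerW]
    ext x
    rw [LinearMap.mem_ker, LinearMap.mem_ker, coordPairing_apply, coordPairing_apply]
    have : ∑ i, ((uu : F) • a) i * x i = (uu : F) * ∑ i, a i * x i := by
      rw [Finset.mul_sum]
      exact Finset.sum_congr rfl fun i _ => by simp [mul_assoc]
    rw [this, mul_eq_zero]
    simp [uu.ne_zero]

lemma three_le_cardPt : 3 ≤ Fintype.card Pt := by
  have h := card_P (F := F)
  rw [Nat.card_eq_fintype_card] at h
  have := two_le_q (F := F)
  have hsq : 0 ≤ Fintype.card F ^ 2 := Nat.zero_le _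
  omega

lemma eq_zero_of_card_le {c : Pt → F} (hc : c ∈ dualRMCode F 2) {S : Finset Pt}
    (hS : S.card ≤ 3) (hsub : ∀ r, c r ≠ 0 → r ∈ S) : c = 0 := by
  obtain ⟨S', hSS', _, hS'3⟩ :=
    Finset.exists_subsuperset_card_eq (Finset.subset_univ S) hS
      (by rw [Finset.card_univ]; exact three_le_cardPt)
  obtain ⟨α, β, γ, _, _, _, hS'⟩ := Finset.card_eq_three.mp hS'3
  refine zero_of_cover hc α β γ fun r hr => ?_
  have := hSS' (hsub r hr)
  rw [hS'] at this
  simpa using this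

lemma supp_eq_of_mem {c : Pt → F} (hc : c ∈ dualRMCode F 2) (hc0 : c ≠ 0)
    {T : Finset Pt} (hT : T.card = 4) (hsub : ∀ r, c r ≠ 0 → r ∈ T) :
    ∀ p ∈ T, c p ≠ 0 := by
  intro p hp hcp
  refine hc0 (eq_zero_of_card_le hc (S := T.erase p) ?_ ?_)
  · rw [Finset.card_erase_of_mem hp, hT]
  · intro r hr
    rw [Finset.mem_erase]
    exact ⟨fun h => hr (h ▸ hcp), hsub r hr⟩

noncomputable def ptFour (T : Finset Pt) (hT : T.card = 4) : Fin 4 → Pt :=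
  fun j => ((T.equivFinOfCardEq hT).symm j : T)

lemma ptFour_inj (T : Finset Pt) (hT : T.card = 4) : Injective (ptFour T hT) := by
  intro j j' h
  have := Subtype.ext (p := fun x => x ∈ T) h
  exact (T.equivFinOfCardEq hT).symm.injective this

lemma ptFour_mem (T : Finset Pt) (hT : T.card = 4) (j : Fin 4) : ptFour T hT j ∈ T :=
  ((T.equivFinOfCardEq hT).symm j).2

lemma ptFour_surj (T : Finset Pt) (hT : T.card = 4) {p : Pt} (hp : p ∈ T) :
    ∃ j, p = ptFour T hT j := by
  refine ⟨T.equivFinOfCardEq hT ⟨p, hp⟩, ?_⟩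
  rw [ptFour]
  rw [Equiv.symm_apply_apply]

lemma good_of_supp {c : Pt → F} (hc : c ∈ dualRMCode F 2) (hc0 : c ≠ 0)
    {T : Finset Pt} (hT : T.card = 4) (hsub : ∀ r, c r ≠ 0 → r ∈ T) :
    ∃ W : Submodule F (Fin 3 → F), finrank F W = 2 ∧ ∀ p ∈ T, p.rep ∈ W := by
  have hne := supp_eq_of_mem hc hc0 hT hsub
  set pt := ptFour T hT with hpt
  have hcol := collinear_of_supp hc pt (ptFour_inj T hT)
    (fun j => hne _ (ptFour_mem T hT j))
    (fun r hr => ptFour_surj T hT (hsub r hr))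
  refine ⟨Submodule.span F {(pt 0).rep, (pt 1).rep},
    finrank_span_pair_reps (ptFour_inj T hT |>.ne (by decide)), fun p hp => ?_⟩
  obtain ⟨j, rfl⟩ := ptFour_surj T hT hp
  exact hcol j

lemma span_eq_of_good {T : Finset Pt} (hT : T.card = 4) {W : Submodule F (Fin 3 → F)}
    (hW : finrank F W = 2) (hmem : ∀ p ∈ T, p.rep ∈ W) :
    Submodule.span F {(ptFour T hT 0).rep, (ptFour T hT 1).rep} = W := by
  refine Submodule.eq_of_le_of_finrank_le ?_ ?_
  · rw [Submodule.span_le]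
    rintro z (rfl | rfl)
    exacts [hmem _ (ptFour_mem T hT 0), hmem _ (ptFour_mem T hT 1)]
  · rw [hW, finrank_span_pair_reps (ptFour_inj T hT |>.ne (by decide))]

lemma card_MT {T : Finset Pt} (hT : T.card = 4) {W : Submodule F (Fin 3 → F)}
    (hW : finrank F W = 2) (hmem : ∀ p ∈ T, p.rep ∈ W) :
    Nat.card {c : Pt → F // c ∈ dualRMCode F 2 ∧ ∀ r, c r ≠ 0 → r ∈ T}
      = Fintype.card F := by
  obtain ⟨x, hxD, hx0, hxsupp⟩ := exists_codeword (ptFour T hT) (ptFour_inj T hT) W hW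
    (fun j => hmem _ (ptFour_mem T hT j))
  have hxT : ∀ r, x r ≠ 0 → r ∈ T := by
    intro r hr
    obtain ⟨j, rfl⟩ := hxsupp r hr
    exact ptFour_mem T hT j
  refine (Nat.card_eq_of_bijective (fun t : F =>
    (⟨t • x, Submodule.smul_mem _ _ hxD, fun r hr => hxT r (by
      intro h; exact hr (by simp [h]))⟩ :
      {c : Pt → F // c ∈ dualRMCode F 2 ∧ ∀ r, c r ≠ 0 → r ∈ T})) ⟨?_, ?_⟩).symm.trans
    (Nat.card_eq_fintype_card)
  · intro t t' h
    have hh : t • x = t' • x := congrArg Subtype.val h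
    obtain ⟨p0, hp0⟩ := Function.ne_iff.mp hx0
    have := congrFun hh p0
    simp only [Pi.smul_apply, smul_eq_mul] at this
    exact mul_right_cancel₀ hp0 this
  · rintro ⟨y, hyD, hyT⟩
    obtain ⟨t, ht⟩ := smul_of_mem hT hxD hyD hxT hyT hx0
    exact ⟨t, Subtype.ext ht.symm⟩

lemma card_ne_one_sub {α : Type*} [Fintype α] (z : α) :
    Nat.card {y : α // y ≠ z} = Fintype.card α - 1 := by
  rw [Nat.card_eq_fintype_card]
  have h := Fintype.card_subtype_compl (α := α) (p := fun y => y = z)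
  have h2 : Fintype.card {x : α // x = z} = 1 := Fintype.card_subtype_eq z
  rw [h2] at h
  calc Fintype.card {y : α // y ≠ z} = Fintype.card {x : α // ¬x = z} :=
        Fintype.card_congr (Equiv.subtypeEquivRight fun _ => Iff.rfl)
    _ = Fintype.card α - 1 := h

noncomputable def ptsF (W : Submodule F (Fin 3 → F)) : Finset Pt :=
  Finset.univ.filter (fun p => p.rep ∈ W)

lemma card_ptsF {W : Submodule F (Fin 3 → F)} (hW : finrank F W = 2) :
    (ptsF W).card = Fintype.card F + 1 := by
  rw [ptsF, ← Fintype.card_subtype, ← Nat.card_eq_fintype_card, card_line hW]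

instance : Finite (Submodule F (Fin 3 → F)) :=
  Finite.of_injective (fun W => (W : Set (Fin 3 → F))) SetLike.coe_injective

lemma card_goodT :
    Nat.card {T : Finset Pt // T.card = 4 ∧
        ∃ W : Submodule F (Fin 3 → F), finrank F W = 2 ∧ ∀ p ∈ T, p.rep ∈ W}
      = (Fintype.card F ^ 2 + Fintype.card F + 1) * (Fintype.card F + 1).choose 4 := by
  classical
  set G := {T : Finset Pt // T.card = 4 ∧
    ∃ W : Submodule F (Fin 3 → F), finrank F W = 2 ∧ ∀ p ∈ T, p.rep ∈ W} with hG
  set Lines := {W : Submodule F (Fin 3 → F) // finrank F W = 2} with hLines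
  haveI : Fintype Lines := Fintype.ofFinite _
  haveI : Fintype G := Fintype.ofFinite _
  set g : G → Lines := fun T =>
    ⟨Submodule.span F {(ptFour T.1 T.2.1 0).rep, (ptFour T.1 T.2.1 1).rep},
      finrank_span_pair_reps (ptFour_inj T.1 T.2.1 |>.ne (by decide))⟩ with hg
  have hcongr := Nat.card_congr (Equiv.sigmaFiberEquiv g).symm
  rw [hcongr, Nat.card_eq_fintype_card, Fintype.card_sigma]
  have hfib : ∀ ℓ : Lines, Fintype.card {T : G // g T = ℓ}
      = (Fintype.card F + 1).choose 4 := by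
    intro ℓ
    have e : {T : G // g T = ℓ} ≃ {T' : Finset Pt // T' ⊆ ptsF ℓ.1 ∧ T'.card = 4} := by
      refine
        { toFun := fun T => ⟨T.1.1, ?_, T.1.2.1⟩
          invFun := fun T' => ⟨⟨T'.1, T'.2.2, ℓ.1, ℓ.2, fun p hp => by
            have := T'.2.1 hp
            rw [ptsF, Finset.mem_filter] at this
            exact this.2⟩, ?_⟩
          left_inv := fun T => by ext : 2; rfl
          right_inv := fun T' => by ext : 2 <;> rfl }
      · obtain ⟨⟨T, hT4, W, hW2, hmemW⟩, hgT⟩ := T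
        intro p hp
        rw [ptsF, Finset.mem_filter]
        refine ⟨Finset.mem_univ _, ?_⟩
        have h1 : Submodule.span F {(ptFour T hT4 0).rep, (ptFour T hT4 1).rep} = W :=
          span_eq_of_good hT4 hW2 hmemW
        have h2 : Submodule.span F {(ptFour T hT4 0).rep, (ptFour T hT4 1).rep} = ℓ.1 :=
          congrArg Subtype.val hgT
        rw [← h2, h1]
        exact hmemW p hp
      · exact Subtype.ext (span_eq_of_good T'.2.2 ℓ.2 (fun p hp => by
          have := T'.2.1 hp
          rw [ptsF, Finset.mem_filter] at this
          exact this.2))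
    rw [← Nat.card_eq_fintype_card, Nat.card_congr e]
    have e2 : {T' : Finset Pt // T' ⊆ ptsF ℓ.1 ∧ T'.card = 4}
        ≃ {T' : Finset Pt // T' ∈ (ptsF ℓ.1).powersetCard 4} :=
      Equiv.subtypeEquivRight fun T' => (Finset.mem_powersetCard).symm
    rw [Nat.card_congr e2, Nat.card_eq_fintype_card]
    have hcc : Fintype.card {T' : Finset Pt // T' ∈ (ptsF ℓ.1).powersetCard 4}
        = ((ptsF ℓ.1).powersetCard 4).card := Fintype.card_coe _
    rw [hcc, Finset.card_powersetCard, card_ptsF ℓ.2]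
  rw [Finset.sum_congr rfl fun ℓ _ => hfib ℓ, Finset.sum_const, Finset.card_univ,
    smul_eq_mul]
  congr 1
  rw [← Nat.card_eq_fintype_card, hLines, card_lines, card_P]

lemma set_eq_of_pair {T : Finset Pt} (hT4 : T.card = 4) {y1 y2 : Pt → F}
    (h1 : y1 ∈ dualRMCode F 2) (h2 : y2 ∈ dualRMCode F 2)
    (hs1 : ∀ r, y1 r ≠ 0 → r ∈ T) (hs2 : ∀ r, y2 r ≠ 0 → r ∈ T)
    (hne : y1 ≠ 0 ∨ y2 ≠ 0) :
    {p : Pt | y1 p ≠ 0 ∨ y2 p ≠ 0} = (T : Set Pt) := by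
  apply Set.eq_of_subset_of_subset
  · rintro p (hp | hp)
    exacts [hs1 p hp, hs2 p hp]
  · intro p hp
    rcases hne with h | h
    · exact Or.inl (supp_eq_of_mem h1 h hT4 hs1 p hp)
    · exact Or.inr (supp_eq_of_mem h2 h hT4 hs2 p hp)

lemma card_pairs_T {T : Finset Pt} (hT4 : T.card = 4)
    (hW : ∃ W : Submodule F (Fin 3 → F), finrank F W = 2 ∧ ∀ p ∈ T, p.rep ∈ W) :
    Nat.card {cc : (Pt → F) × (Pt → F) //
      (cc.1 ∈ dualRMCode F 2 ∧ cc.2 ∈ dualRMCode F 2 ∧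
        Nat.card {p : Pt | cc.1 p ≠ 0 ∨ cc.2 p ≠ 0} = 4) ∧
      (Set.toFinite {p : Pt | cc.1 p ≠ 0 ∨ cc.2 p ≠ 0}).toFinset = T}
      = Fintype.card F ^ 2 - 1 := by
  classical
  obtain ⟨W, hW2, hmemW⟩ := hW
  set U := {c : Pt → F // c ∈ dualRMCode F 2 ∧ ∀ r, c r ≠ 0 → r ∈ T} with hU
  haveI : Fintype U := Fintype.ofFinite _
  set z0 : U := ⟨0, Submodule.zero_mem _, fun r hr => absurd rfl hr⟩ with hz0
  have e : {cc : (Pt → F) × (Pt → F) //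
      (cc.1 ∈ dualRMCode F 2 ∧ cc.2 ∈ dualRMCode F 2 ∧
        Nat.card {p : Pt | cc.1 p ≠ 0 ∨ cc.2 p ≠ 0} = 4) ∧
      (Set.toFinite {p : Pt | cc.1 p ≠ 0 ∨ cc.2 p ≠ 0}).toFinset = T}
      ≃ {y : U × U // y ≠ (z0, z0)} := by
    refine
      { toFun := fun x => ⟨(⟨x.1.1, x.2.1.1, fun r hr => ?_⟩, ⟨x.1.2, x.2.1.2.1,
          fun r hr => ?_⟩), ?_⟩
        invFun := fun y => ⟨(y.1.1.1, y.1.2.1), ⟨y.1.1.2.1, y.1.2.2.1, ?_⟩, ?_⟩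
        left_inv := fun x => by ext : 2 <;> rfl
        right_inv := fun y => by
          apply Subtype.ext
          apply Prod.ext <;> apply Subtype.ext <;> rfl }
    · rw [← x.2.2, Set.Finite.mem_toFinset]
      exact Or.inl hr
    · rw [← x.2.2, Set.Finite.mem_toFinset]
      exact Or.inr hr
    · intro hzz
      have hc1 : x.1.1 = 0 := congrArg (fun y => (y.1 : Pt → F)) hzz
      have hc2 : x.1.2 = 0 := congrArg (fun y => (y.2 : Pt → F)) hzz
      have h4 := x.2.1.2.2
      rw [show {p : Pt | x.1.1 p ≠ 0 ∨ x.1.2 p ≠ 0} = ∅ by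
        ext p; simp [hc1, hc2]] at h4
      simp at h4
    · -- card
      have hne : (y.1.1 : Pt → F) ≠ 0 ∨ (y.1.2 : Pt → F) ≠ 0 := by
        by_contra hb
        push_neg at hb
        exact y.2 (Prod.ext (Subtype.ext hb.1) (Subtype.ext hb.2))
      rw [set_eq_of_pair hT4 y.1.1.2.1 y.1.2.2.1 y.1.1.2.2 y.1.2.2.2 hne,
        Nat.card_coe_set_eq, Set.ncard_coe_finset, hT4]
    · have hne : (y.1.1 : Pt → F) ≠ 0 ∨ (y.1.2 : Pt → F) ≠ 0 := by
        by_contra hb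
        push_neg at hb
        exact y.2 (Prod.ext (Subtype.ext hb.1) (Subtype.ext hb.2))
      ext p
      rw [Set.Finite.mem_toFinset,
        set_eq_of_pair hT4 y.1.1.2.1 y.1.2.2.1 y.1.1.2.2 y.1.2.2.2 hne]
      simp
  rw [Nat.card_congr e, card_ne_one_sub, Fintype.card_prod]
  have hU : Fintype.card U = Fintype.card F := by
    rw [← Nat.card_eq_fintype_card]
    exact card_MT hT4 hW2 hmemW
  rw [hU, ← pow_two]

lemma part1 :
    Nat.card {cc : (Pt → F) × (Pt → F) |
        cc.1 ∈ dualRMCode F 2 ∧ cc.2 ∈ dualRMCode F 2 ∧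
        Nat.card {p : Pt | cc.1 p ≠ 0 ∨ cc.2 p ≠ 0} = 0} = 1 := by
  have hset : {cc : (Pt → F) × (Pt → F) |
      cc.1 ∈ dualRMCode F 2 ∧ cc.2 ∈ dualRMCode F 2 ∧
      Nat.card {p : Pt | cc.1 p ≠ 0 ∨ cc.2 p ≠ 0} = 0} = {((0 : Pt → F), (0 : Pt → F))} := by
    ext cc
    simp only [Set.mem_setOf_eq, Set.mem_singleton_iff]
    constructor
    · rintro ⟨h1, h2, h3⟩
      rw [Nat.card_coe_set_eq] at h3
      have hemp := (Set.ncard_eq_zero (Set.toFinite _)).mp h3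
      have hc1 : cc.1 = 0 := funext fun p => by
        by_contra hp
        have hmem : p ∈ ({p : Pt | cc.1 p ≠ 0 ∨ cc.2 p ≠ 0} : Set Pt) := Or.inl hp
        rw [hemp] at hmem
        exact hmem
      have hc2 : cc.2 = 0 := funext fun p => by
        by_contra hp
        have hmem : p ∈ ({p : Pt | cc.1 p ≠ 0 ∨ cc.2 p ≠ 0} : Set Pt) := Or.inr hp
        rw [hemp] at hmem
        exact hmem
      exact Prod.ext hc1 hc2
    · rintro rfl
      refine ⟨Submodule.zero_mem _, Submodule.zero_mem _, ?_⟩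
      have hemp : {p : Pt | (0 : Pt → F) p ≠ 0 ∨ (0 : Pt → F) p ≠ 0} = ∅ := by
        ext p; simp
      rw [hemp, Nat.card_coe_set_eq, Set.ncard_empty]
  rw [hset, Nat.card_coe_set_eq, Set.ncard_singleton]

lemma part2 (i : ℕ) (hi1 : 1 ≤ i) (hi3 : i ≤ 3) :
    Nat.card {cc : (Pt → F) × (Pt → F) |
        cc.1 ∈ dualRMCode F 2 ∧ cc.2 ∈ dualRMCode F 2 ∧
        Nat.card {p : Pt | cc.1 p ≠ 0 ∨ cc.2 p ≠ 0} = i} = 0 := by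
  have hset : {cc : (Pt → F) × (Pt → F) |
      cc.1 ∈ dualRMCode F 2 ∧ cc.2 ∈ dualRMCode F 2 ∧
      Nat.card {p : Pt | cc.1 p ≠ 0 ∨ cc.2 p ≠ 0} = i} = ∅ := by
    ext cc
    simp only [Set.mem_setOf_eq, Set.mem_empty_iff_false, iff_false]
    rintro ⟨h1, h2, h3⟩
    set S := (Set.toFinite {p : Pt | cc.1 p ≠ 0 ∨ cc.2 p ≠ 0}).toFinset with hS
    have hScard : S.card = i := by
      rw [hS, ← Set.ncard_eq_toFinset_card, ← Nat.card_coe_set_eq, h3]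
    have hc1 : cc.1 = 0 := eq_zero_of_card_le h1 (S := S) (by omega) fun r hr => by
      rw [hS, Set.Finite.mem_toFinset]
      exact Or.inl hr
    have hc2 : cc.2 = 0 := eq_zero_of_card_le h2 (S := S) (by omega) fun r hr => by
      rw [hS, Set.Finite.mem_toFinset]
      exact Or.inr hr
    rw [hc1, hc2] at h3
    have hemp : {p : Pt | (0 : Pt → F) p ≠ 0 ∨ (0 : Pt → F) p ≠ 0} = ∅ := by
      ext p; simp
    rw [hemp, Nat.card_coe_set_eq, Set.ncard_empty] at h3
    omega
  rw [hset, Nat.card_coe_set_eq, Set.ncard_empty]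

lemma part3 :
    Nat.card {cc : (Pt → F) × (Pt → F) |
        cc.1 ∈ dualRMCode F 2 ∧ cc.2 ∈ dualRMCode F 2 ∧
        Nat.card {p : Pt | cc.1 p ≠ 0 ∨ cc.2 p ≠ 0} = 4} =
      (Fintype.card F ^ 2 - 1) * (Fintype.card F ^ 2 + Fintype.card F + 1) *
        (Fintype.card F + 1).choose 4 := by
  classical
  set Sset := {cc : (Pt → F) × (Pt → F) |
      cc.1 ∈ dualRMCode F 2 ∧ cc.2 ∈ dualRMCode F 2 ∧
      Nat.card {p : Pt | cc.1 p ≠ 0 ∨ cc.2 p ≠ 0} = 4} with hSset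
  set G := {T : Finset Pt // T.card = 4 ∧
    ∃ W : Submodule F (Fin 3 → F), finrank F W = 2 ∧ ∀ p ∈ T, p.rep ∈ W} with hG
  haveI : Fintype G := Fintype.ofFinite _
  haveI : Fintype ↥Sset := Fintype.ofFinite _
  have hfT4 : ∀ cc : ↥Sset,
      (Set.toFinite {p : Pt | cc.1.1 p ≠ 0 ∨ cc.1.2 p ≠ 0}).toFinset.card = 4 := by
    intro cc
    obtain ⟨h1, h2, h3⟩ := cc.2
    rw [← Set.ncard_eq_toFinset_card, ← Nat.card_coe_set_eq, h3]
  have hfgood : ∀ cc : ↥Sset,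
      ∃ W : Submodule F (Fin 3 → F), finrank F W = 2 ∧
        ∀ p ∈ (Set.toFinite {p : Pt | cc.1.1 p ≠ 0 ∨ cc.1.2 p ≠ 0}).toFinset, p.rep ∈ W := by
    intro cc
    obtain ⟨h1, h2, h3⟩ := cc.2
    by_cases hc1 : cc.1.1 = 0
    · have hc2 : cc.1.2 ≠ 0 := by
        intro hc2
        rw [show {p : Pt | cc.1.1 p ≠ 0 ∨ cc.1.2 p ≠ 0} = ∅ by ext p; simp [hc1, hc2],
          Nat.card_coe_set_eq, Set.ncard_empty] at h3
        omega
      exact good_of_supp h2 hc2 (hfT4 cc) fun r hr => by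
        rw [Set.Finite.mem_toFinset]; exact Or.inr hr
    · exact good_of_supp h1 hc1 (hfT4 cc) fun r hr => by
        rw [Set.Finite.mem_toFinset]; exact Or.inl hr
  set f : ↥Sset → G := fun cc =>
    ⟨(Set.toFinite {p : Pt | cc.1.1 p ≠ 0 ∨ cc.1.2 p ≠ 0}).toFinset,
      hfT4 cc, hfgood cc⟩ with hf
  have hmain : Nat.card ↥Sset = Fintype.card G * (Fintype.card F ^ 2 - 1) := by
    rw [Nat.card_congr (Equiv.sigmaFiberEquiv f).symm, Nat.card_eq_fintype_card,
      Fintype.card_sigma]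
    have hfib : ∀ T : G, Fintype.card {cc : ↥Sset // f cc = T}
        = Fintype.card F ^ 2 - 1 := by
      intro T
      rw [← Nat.card_eq_fintype_card]
      have e : {cc : ↥Sset // f cc = T} ≃
          {cc : (Pt → F) × (Pt → F) //
            (cc.1 ∈ dualRMCode F 2 ∧ cc.2 ∈ dualRMCode F 2 ∧
              Nat.card {p : Pt | cc.1 p ≠ 0 ∨ cc.2 p ≠ 0} = 4) ∧
            (Set.toFinite {p : Pt | cc.1 p ≠ 0 ∨ cc.2 p ≠ 0}).toFinset = T.1} :=
        { toFun := fun x => ⟨x.1.1, x.1.2, congrArg Subtype.val x.2⟩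
          invFun := fun y => ⟨⟨y.1, y.2.1⟩, Subtype.ext y.2.2⟩
          left_inv := fun x => by ext : 2 <;> rfl
          right_inv := fun y => by ext : 2 <;> rfl }
      rw [Nat.card_congr e]
      exact card_pairs_T T.2.1 T.2.2
    rw [Finset.sum_congr rfl fun T _ => hfib T, Finset.sum_const, Finset.card_univ,
      smul_eq_mul]
  rw [hmain, ← Nat.card_eq_fintype_card, hG, card_goodT, mul_comm, ← mul_assoc]

end DCC

/-- The low-weight coefficients of the second weight enumerator
`W^{[2]}_{C_{2,2}^⊥}(X,Y) = Σ_i B^{[2]}_i X^{q²+q+1-i} Y^i` of the dual conic code: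
`B^{[2]}_0 = 1`, `B^{[2]}_1 = B^{[2]}_2 = B^{[2]}_3 = 0`, and
`B^{[2]}_4 = (q²-1)(q²+q+1)·C(q+1,4)`.  Here `B^{[2]}_i` counts ordered pairs of dual codewords
that are not both zero at exactly `i` coordinates. -/
theorem dual_conic_code_second_enumerator_low_coeffs (F : Type*) [Field F] [Fintype F]
    [Fintype (Projectivization F (Fin 3 → F))] (q : ℕ) (hq : q = Fintype.card F) :
    Nat.card {cc : (Projectivization F (Fin 3 → F) → F) ×
        (Projectivization F (Fin 3 → F) → F) |
        cc.1 ∈ dualRMCode F 2 ∧ cc.2 ∈ dualRMCode F 2 ∧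
        Nat.card {p | cc.1 p ≠ 0 ∨ cc.2 p ≠ 0} = 0} = 1 ∧
    (∀ i, 1 ≤ i → i ≤ 3 →
      Nat.card {cc : (Projectivization F (Fin 3 → F) → F) ×
          (Projectivization F (Fin 3 → F) → F) |
          cc.1 ∈ dualRMCode F 2 ∧ cc.2 ∈ dualRMCode F 2 ∧
          Nat.card {p | cc.1 p ≠ 0 ∨ cc.2 p ≠ 0} = i} = 0) ∧
    Nat.card {cc : (Projectivization F (Fin 3 → F) → F) ×
        (Projectivization F (Fin 3 → F) → F) |
        cc.1 ∈ dualRMCode F 2 ∧ cc.2 ∈ dualRMCode F 2 ∧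
        Nat.card {p | cc.1 p ≠ 0 ∨ cc.2 p ≠ 0} = 4} =
      (q ^ 2 - 1) * (q ^ 2 + q + 1) * (q + 1).choose 4 := by
  subst hq
  exact ⟨DCC.part1, fun i h1 h3 => DCC.part2 i h1 h3, DCC.part3⟩
end
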